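/- arXiv:1304.2473 — 2 statements merged into one kernel-verified Lean document; each statement's English description precedes it below -/
import Mathlib

section
/- Let r > 0, let D be the open disk of radius r centered at (φ_c, ψ_c), and let q be of class C² on an open set containing cl D, satisfying (⋆) in D, with 0 < q < c_* in D. Let P = (φ₀, ψ₀) be a point of the boundary circle ∂D with q(P) = c_*, and suppose that the direction from the center to P is not parallel to the φ-axis, i.e. ψ₀ ≠ ψ_c. Then for every unit vector μ forming an acute angle with the direction from the center to P (i.e. μ · (P − (φ_c,ψ_c)) > 0), the directional derivative of q at P along μ is strictly positive: ∂q/∂μ(P) > 0. -/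
open Real Set MeasureTheory Filter

noncomputable section

/-- The density function `ρ(t) = (1 − ((γ−1)/2) t)^{1/(γ−1)}`. -/
def rhoF (γ t : ℝ) : ℝ := (1 - (γ - 1) / 2 * t) ^ ((1 : ℝ) / (γ - 1))

/-- The critical (sonic) speed `c_* = (2/(γ+1))^{1/2}`. -/
def cstar (γ : ℝ) : ℝ := Real.sqrt (2 / (γ + 1))

/-- The maximal speed `q_max = (2/(γ−1))^{1/2}`. -/
def qmaxF (γ : ℝ) : ℝ := Real.sqrt (2 / (γ - 1))

/-- `A(q) = ∫_{c_*}^q (ρ(s²)+2s²ρ'(s²))/(s ρ(s²)²) ds`. -/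
def Afun (γ q : ℝ) : ℝ :=
  ∫ s in (cstar γ)..q,
    (rhoF γ (s ^ 2) + 2 * s ^ 2 * deriv (rhoF γ) (s ^ 2)) / (s * (rhoF γ (s ^ 2)) ^ 2)

/-- `B(q) = ∫_{c_*}^q ρ(s²)/s ds`. -/
def Bfun (γ q : ℝ) : ℝ := ∫ s in (cstar γ)..q, rhoF γ (s ^ 2) / s

/-- Inverse of `A` restricted to `[c_*, q_max)`. -/
def AplusInv (γ : ℝ) : ℝ → ℝ := Function.invFunOn (Afun γ) (Ico (cstar γ) (qmaxF γ))

/-- `K(s) = B(A₊⁻¹(s))`. -/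
def Kfun (γ s : ℝ) : ℝ := Bfun γ (AplusInv γ s)

/-- `b(s) = −K'(s)`. -/
def bfun (γ s : ℝ) : ℝ := -deriv (Kfun γ) s

/-- `p(s) = −K''(s)`. -/
def pfun (γ s : ℝ) : ℝ := -deriv (deriv (Kfun γ)) s

/-- Partial derivative in the first (potential) variable. -/
def pdx (u : ℝ × ℝ → ℝ) (p : ℝ × ℝ) : ℝ := deriv (fun x => u (x, p.2)) p.1

/-- Partial derivative in the second (stream) variable. -/
def pdy (u : ℝ × ℝ → ℝ) (p : ℝ × ℝ) : ℝ := deriv (fun y => u (p.1, y)) p.2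

/-- The Chaplygin equation (⋆) at a point. -/
def chap (γ : ℝ) (q : ℝ × ℝ → ℝ) (p : ℝ × ℝ) : Prop :=
  pdx (pdx fun z => Afun γ (q z)) p + pdy (pdy fun z => Bfun γ (q z)) p = 0

/-- The open Euclidean disk of radius `r` centred at `c`. -/
def diskC (c : ℝ × ℝ) (r : ℝ) : Set (ℝ × ℝ) :=
  {p | (p.1 - c.1) ^ 2 + (p.2 - c.2) ^ 2 < r ^ 2}

/-- closed form of the `A`-integrand -/
def gA (γ s : ℝ) : ℝ :=
  (1 - (γ + 1) / 2 * s ^ 2) * (1 - (γ - 1) / 2 * s ^ 2) ^ ((1:ℝ)/(γ-1) - 1) /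
    (s * ((1 - (γ - 1) / 2 * s ^ 2) ^ ((1:ℝ)/(γ-1))) ^ 2)

/-- closed form of the `B`-integrand -/
def gB (γ s : ℝ) : ℝ := (1 - (γ - 1) / 2 * s ^ 2) ^ ((1:ℝ)/(γ-1)) / s

section gamma
variable {γ : ℝ} (hγ : 1 < γ)
include hγ

lemma qmax_sq : (qmaxF γ) ^ 2 = 2 / (γ - 1) := by
  rw [qmaxF, sq_sqrt]; apply div_nonneg <;> linarith

lemma cstar_pos : 0 < cstar γ := by
  rw [cstar]; apply Real.sqrt_pos.2; apply div_pos <;> linarith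

lemma cstar_sq : (cstar γ) ^ 2 = 2 / (γ + 1) := by
  rw [cstar, sq_sqrt]; apply div_nonneg <;> linarith

lemma cstar_lt_qmax : cstar γ < qmaxF γ := by
  rw [cstar, qmaxF]
  apply Real.sqrt_lt_sqrt (by positivity)
  apply div_lt_div_of_pos_left (by norm_num) (by linarith) (by linarith)

lemma base_pos {s : ℝ} (hs : s ∈ Ioo 0 (qmaxF γ)) : 0 < 1 - (γ - 1) / 2 * s ^ 2 := by
  have hqm : 0 < qmaxF γ := lt_trans (cstar_pos hγ) (cstar_lt_qmax hγ)
  have h1 : s ^ 2 < (qmaxF γ) ^ 2 := by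
    apply sq_lt_sq' _ hs.2
    linarith [hs.1]
  rw [qmax_sq hγ] at h1
  have h2 : (γ - 1) / 2 * s ^ 2 < (γ - 1) / 2 * (2 / (γ - 1)) := by
    apply mul_lt_mul_of_pos_left h1 (by linarith)
  have h3 : (γ - 1) / 2 * (2 / (γ - 1)) = 1 := by
    have : γ - 1 ≠ 0 := by linarith
    field_simp
  linarith

lemma rho_hasDerivAt {t : ℝ} (ht : 0 < 1 - (γ - 1) / 2 * t) :
    HasDerivAt (rhoF γ) (-(1/2) * (1 - (γ - 1) / 2 * t) ^ ((1:ℝ)/(γ-1) - 1)) t := by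
  have h1 : HasDerivAt (fun t : ℝ => 1 - (γ - 1) / 2 * t) (-((γ-1)/2)) t := by
    simpa [Pi.sub_def] using ((hasDerivAt_const t (1:ℝ)).sub ((hasDerivAt_id t).const_mul ((γ-1)/2)))
  have h2 := (Real.hasDerivAt_rpow_const (x := 1 - (γ - 1) / 2 * t) (p := (1:ℝ)/(γ-1))
    (Or.inl ht.ne')).comp t h1
  have hne : γ - 1 ≠ 0 := by linarith
  have : (1:ℝ)/(γ-1) * (1 - (γ - 1) / 2 * t) ^ ((1:ℝ)/(γ-1) - 1) * -((γ-1)/2)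
      = -(1/2) * (1 - (γ - 1) / 2 * t) ^ ((1:ℝ)/(γ-1) - 1) := by
    set X := (1 - (γ - 1) / 2 * t) ^ ((1:ℝ)/(γ-1) - 1) with hX
    field_simp
  rw [this] at h2
  exact h2

lemma deriv_rho {t : ℝ} (ht : 0 < 1 - (γ - 1) / 2 * t) :
    deriv (rhoF γ) t = -(1/2) * (1 - (γ - 1) / 2 * t) ^ ((1:ℝ)/(γ-1) - 1) :=
  (rho_hasDerivAt hγ ht).deriv

lemma integrandA_eq {s : ℝ} (hs : s ∈ Ioo 0 (qmaxF γ)) :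
    (rhoF γ (s ^ 2) + 2 * s ^ 2 * deriv (rhoF γ) (s ^ 2)) / (s * (rhoF γ (s ^ 2)) ^ 2)
      = gA γ s := by
  have hb : 0 < 1 - (γ - 1) / 2 * s ^ 2 := base_pos hγ hs
  rw [deriv_rho hγ hb, rhoF, gA]
  congr 1
  have h1 : (1 - (γ - 1) / 2 * s ^ 2) ^ ((1:ℝ)/(γ-1))
      = (1 - (γ - 1) / 2 * s ^ 2) ^ ((1:ℝ)/(γ-1) - 1) * (1 - (γ - 1) / 2 * s ^ 2) := by
    rw [← Real.rpow_add_one hb.ne']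
    ring_nf
  rw [h1]; ring

omit hγ in
lemma integrandB_eq {s : ℝ} : rhoF γ (s ^ 2) / s = gB γ s := rfl

end gamma

section gamma2
variable {γ : ℝ} (hγ : 1 < γ)
include hγ

lemma gA_contDiffOn : ContDiffOn ℝ 2 (gA γ) (Ioo 0 (qmaxF γ)) := by
  intro s hs
  apply ContDiffAt.contDiffWithinAt
  have hb := base_pos hγ hs
  have hbase : ContDiffAt ℝ 2 (fun s : ℝ => 1 - (γ - 1) / 2 * s ^ 2) s := by
    apply ContDiffAt.sub contDiffAt_const
    exact (contDiffAt_id.pow 2).const_smul ((γ-1)/2) |>.congr_of_eventuallyEq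
      (by filter_upwards with x; simp [smul_eq_mul])
  have h1 : ContDiffAt ℝ 2 (fun s : ℝ => (1 - (γ - 1) / 2 * s ^ 2) ^ ((1:ℝ)/(γ-1) - 1)) s :=
    by exact (Real.contDiffAt_rpow_const_of_ne (p := (1:ℝ)/(γ-1) - 1) hb.ne').comp s hbase
  have h2 : ContDiffAt ℝ 2 (fun s : ℝ => (1 - (γ - 1) / 2 * s ^ 2) ^ ((1:ℝ)/(γ-1))) s :=
    by exact (Real.contDiffAt_rpow_const_of_ne (p := (1:ℝ)/(γ-1)) hb.ne').comp s hbase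
  have hden : s * ((1 - (γ - 1) / 2 * s ^ 2) ^ ((1:ℝ)/(γ-1))) ^ 2 ≠ 0 := by
    have h2 := Real.rpow_pos_of_pos hb ((1:ℝ)/(γ-1))
    have h3 := hs.1
    positivity
  exact (((contDiffAt_const.sub ((contDiffAt_id.pow 2).const_smul ((γ+1)/2) |>.congr_of_eventuallyEq
      (by filter_upwards with x; simp [smul_eq_mul]))).mul h1).div
    (contDiffAt_id.mul (h2.pow 2)) hden)

lemma gB_contDiffOn : ContDiffOn ℝ 2 (gB γ) (Ioo 0 (qmaxF γ)) := by
  intro s hs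
  apply ContDiffAt.contDiffWithinAt
  have hb := base_pos hγ hs
  have hbase : ContDiffAt ℝ 2 (fun s : ℝ => 1 - (γ - 1) / 2 * s ^ 2) s := by
    apply ContDiffAt.sub contDiffAt_const
    exact (contDiffAt_id.pow 2).const_smul ((γ-1)/2) |>.congr_of_eventuallyEq
      (by filter_upwards with x; simp [smul_eq_mul])
  exact (((Real.contDiffAt_rpow_const_of_ne hb.ne').comp s hbase).div contDiffAt_id
    hs.1.ne')

lemma gA_pos {s : ℝ} (hs : s ∈ Ioo 0 (cstar γ)) : 0 < gA γ s := by
  have hsub : s ∈ Ioo 0 (qmaxF γ) := ⟨hs.1, hs.2.trans (cstar_lt_qmax hγ)⟩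
  have hb := base_pos hγ hsub
  have hnum : 0 < 1 - (γ + 1) / 2 * s ^ 2 := by
    have h1 : s ^ 2 < (cstar γ) ^ 2 := by
      apply sq_lt_sq' _ hs.2
      linarith [hs.1, cstar_pos hγ]
    rw [cstar_sq hγ] at h1
    have h2 : (γ + 1) / 2 * s ^ 2 < (γ + 1) / 2 * (2 / (γ + 1)) :=
      mul_lt_mul_of_pos_left h1 (by linarith)
    have h3 : (γ + 1) / 2 * (2 / (γ + 1)) = 1 := by
      have : γ + 1 ≠ 0 := by linarith
      field_simp
    linarith
  have e1 := Real.rpow_pos_of_pos hb ((1:ℝ)/(γ-1) - 1)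
  have e2 := Real.rpow_pos_of_pos hb ((1:ℝ)/(γ-1))
  have := hs.1
  rw [gA]; positivity

lemma gB_pos {s : ℝ} (hs : s ∈ Ioo 0 (qmaxF γ)) : 0 < gB γ s := by
  have hb := base_pos hγ hs
  have := Real.rpow_pos_of_pos hb ((1:ℝ)/(γ-1))
  have := hs.1
  rw [gB]; positivity

lemma integrandA_contOn :
    ContinuousOn (fun s => (rhoF γ (s ^ 2) + 2 * s ^ 2 * deriv (rhoF γ) (s ^ 2)) /
      (s * (rhoF γ (s ^ 2)) ^ 2)) (Ioo 0 (qmaxF γ)) := by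
  apply ContinuousOn.congr ((gA_contDiffOn hγ).continuousOn)
  intro s hs; exact integrandA_eq hγ hs

lemma Afun_hasDerivAt {x : ℝ} (hx : x ∈ Ioo 0 (qmaxF γ)) :
    HasDerivAt (Afun γ) (gA γ x) x := by
  have hc : cstar γ ∈ Ioo 0 (qmaxF γ) := ⟨cstar_pos hγ, cstar_lt_qmax hγ⟩
  have hsub : uIcc (cstar γ) x ⊆ Ioo 0 (qmaxF γ) :=
    (Set.ordConnected_Ioo).uIcc_subset hc hx
  have hint := ((integrandA_contOn hγ).mono hsub).intervalIntegrable (μ := volume)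
  have hmeas := (integrandA_contOn hγ).stronglyMeasurableAtFilter (μ := volume) isOpen_Ioo x hx
  have hca : ContinuousAt (fun s => (rhoF γ (s ^ 2) + 2 * s ^ 2 * deriv (rhoF γ) (s ^ 2)) /
      (s * (rhoF γ (s ^ 2)) ^ 2)) x :=
    (integrandA_contOn hγ).continuousAt (isOpen_Ioo.mem_nhds hx)
  have := intervalIntegral.integral_hasDerivAt_right hint hmeas hca
  rw [integrandA_eq hγ hx] at this
  exact this

lemma Bfun_hasDerivAt {x : ℝ} (hx : x ∈ Ioo 0 (qmaxF γ)) :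
    HasDerivAt (Bfun γ) (gB γ x) x := by
  have hc : cstar γ ∈ Ioo 0 (qmaxF γ) := ⟨cstar_pos hγ, cstar_lt_qmax hγ⟩
  have hsub : uIcc (cstar γ) x ⊆ Ioo 0 (qmaxF γ) :=
    (Set.ordConnected_Ioo).uIcc_subset hc hx
  have hcont : ContinuousOn (fun s => rhoF γ (s ^ 2) / s) (Ioo 0 (qmaxF γ)) :=
    (gB_contDiffOn hγ).continuousOn
  have hint := (hcont.mono hsub).intervalIntegrable (μ := volume)
  have hmeas := hcont.stronglyMeasurableAtFilter (μ := volume) isOpen_Ioo x hx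
  have hca := hcont.continuousAt (isOpen_Ioo.mem_nhds hx)
  exact intervalIntegral.integral_hasDerivAt_right hint hmeas hca

lemma deriv_gA_contOn : ContinuousOn (deriv (gA γ)) (Ioo 0 (qmaxF γ)) := by
  have := (gA_contDiffOn hγ).deriv_of_isOpen (m := 1) isOpen_Ioo (by norm_num)
  exact this.continuousOn

lemma deriv_gB_contOn : ContinuousOn (deriv (gB γ)) (Ioo 0 (qmaxF γ)) := by
  have := (gB_contDiffOn hγ).deriv_of_isOpen (m := 1) isOpen_Ioo (by norm_num)
  exact this.continuousOn

lemma gA_hasDerivAt {x : ℝ} (hx : x ∈ Ioo 0 (qmaxF γ)) :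
    HasDerivAt (gA γ) (deriv (gA γ) x) x := by
  have := ((gA_contDiffOn hγ).differentiableOn (by norm_num)).differentiableAt
    (isOpen_Ioo.mem_nhds hx)
  exact this.hasDerivAt

lemma gB_hasDerivAt {x : ℝ} (hx : x ∈ Ioo 0 (qmaxF γ)) :
    HasDerivAt (gB γ) (deriv (gB γ) x) x := by
  have := ((gB_contDiffOn hγ).differentiableOn (by norm_num)).differentiableAt
    (isOpen_Ioo.mem_nhds hx)
  exact this.hasDerivAt

end gamma2

/-- At an interior local max, if `f` has derivative `f'` near `x` and `f'` is
differentiable at `x`, then `f' x = 0` and `(f')' x ≤ 0`. -/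
lemma local_max_second_deriv {f f' : ℝ → ℝ} {x d : ℝ} (hmax : IsLocalMax f x)
    (hf' : ∀ᶠ y in nhds x, HasDerivAt f (f' y) y) (hd : HasDerivAt f' d x) :
    f' x = 0 ∧ d ≤ 0 := by
  have hfx : f' x = 0 := by
    have h1 := hmax.deriv_eq_zero
    have h2 : deriv f x = f' x := (hf'.self_of_nhds).deriv
    rw [← h2, h1]
  refine ⟨hfx, ?_⟩
  by_contra hpos
  push_neg at hpos
  have hslope : Tendsto (slope f' x) (nhdsWithin x {x}ᶜ) (nhds d) :=
    hasDerivAt_iff_tendsto_slope.1 hd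
  have hev : ∀ᶠ y in nhdsWithin x (Ioi x), 0 < f' y := by
    have h3 : ∀ᶠ y in nhdsWithin x (Ioi x), d / 2 < slope f' x y :=
      (hslope.mono_left (nhdsWithin_mono x (fun y hy => ne_of_gt hy))).eventually
        (eventually_gt_nhds (by linarith))
    filter_upwards [h3, self_mem_nhdsWithin] with y hy hyx
    rw [slope_def_field, hfx, sub_zero] at hy
    have hyx' : 0 < y - x := sub_pos.2 hyx
    have := (lt_div_iff₀ hyx').1 hy
    nlinarith
  have hcomb : ∀ᶠ y in nhdsWithin x (Ioi x),
      0 < f' y ∧ HasDerivAt f (f' y) y ∧ f y ≤ f x :=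
    hev.and ((hf'.and hmax).filter_mono nhdsWithin_le_nhds)
  rw [Filter.eventually_iff, mem_nhdsGT_iff_exists_Ioc_subset] at hcomb
  obtain ⟨u, hu, hsub⟩ := hcomb
  have hu' : x < u := hu
  have hmono : StrictMonoOn f (Icc x u) := by
    apply strictMonoOn_of_deriv_pos (convex_Icc x u)
    · intro y hy
      rcases eq_or_lt_of_le hy.1 with h | h
      · exact (h ▸ (hf'.self_of_nhds).continuousAt.continuousWithinAt)
      · exact ((hsub ⟨h, hy.2⟩ : _ ∈ {y | _ ∧ _}).2.1.continuousAt).continuousWithinAt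
    · intro y hy
      rw [interior_Icc] at hy
      have hy' := hsub ⟨hy.1, le_of_lt hy.2⟩
      rw [hy'.2.1.deriv]
      exact hy'.1
  have h5 := hmono (left_mem_Icc.2 (le_of_lt hu')) (right_mem_Icc.2 (le_of_lt hu')) hu'
  have h6 := (hsub (right_mem_Ioc.2 hu')).2.2
  linarith

/-- If `f ≥ 0` on `(-t₀, 0)`, `f 0 = 0` and `f` has derivative `d` at `0`, then `d ≤ 0`. -/
lemma right_endpoint_deriv_nonpos {f : ℝ → ℝ} {d t₀ : ℝ} (ht₀ : 0 < t₀)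
    (h : ∀ t, -t₀ < t → t < 0 → 0 ≤ f t) (h0 : f 0 = 0) (hd : HasDerivAt f d 0) :
    d ≤ 0 := by
  have hslope : Tendsto (slope f 0) (nhdsWithin 0 (Iio 0)) (nhds d) :=
    (hasDerivAt_iff_tendsto_slope.1 hd).mono_left
      (nhdsWithin_mono 0 (fun y hy => ne_of_lt hy))
  have hev : ∀ᶠ t in nhdsWithin 0 (Iio 0), slope f 0 t ≤ 0 := by
    filter_upwards [Ioo_mem_nhdsLT_of_mem (⟨neg_lt_zero.2 ht₀, le_refl (0:ℝ)⟩ :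
      (0:ℝ) ∈ Ioc (-t₀) 0), self_mem_nhdsWithin] with t ht ht0
    rw [slope_def_field, h0, sub_zero, sub_zero]
    exact div_nonpos_of_nonneg_of_nonpos (h t ht.1 ht0) (le_of_lt ht0)
  exact le_of_tendsto hslope hev

/-- Section derivative in the first variable. -/
lemma hasDerivAt_sec1 {u : ℝ × ℝ → ℝ} {p : ℝ × ℝ} (hd : DifferentiableAt ℝ u p) :
    HasDerivAt (fun x => u (x, p.2)) (fderiv ℝ u p (1, 0)) p.1 := by
  have hline : HasDerivAt (fun x : ℝ => (x, p.2)) ((1 : ℝ), (0 : ℝ)) p.1 :=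
    (hasDerivAt_id p.1).prodMk (hasDerivAt_const p.1 p.2)
  have := hd.hasFDerivAt.comp_hasDerivAt p.1 (by simpa using hline)
  simpa [Function.comp_def] using this

/-- Section derivative in the second variable. -/
lemma hasDerivAt_sec2 {u : ℝ × ℝ → ℝ} {p : ℝ × ℝ} (hd : DifferentiableAt ℝ u p) :
    HasDerivAt (fun y => u (p.1, y)) (fderiv ℝ u p (0, 1)) p.2 := by
  have hline : HasDerivAt (fun y : ℝ => (p.1, y)) ((0 : ℝ), (1 : ℝ)) p.2 :=
    (hasDerivAt_const p.2 p.1).prodMk (hasDerivAt_id p.2)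
  have := hd.hasFDerivAt.comp_hasDerivAt p.2 (by simpa using hline)
  simpa [Function.comp_def] using this

lemma pdx_eq_fderiv {u : ℝ × ℝ → ℝ} {p : ℝ × ℝ} (hd : DifferentiableAt ℝ u p) :
    pdx u p = fderiv ℝ u p (1, 0) := (hasDerivAt_sec1 hd).deriv

lemma pdy_eq_fderiv {u : ℝ × ℝ → ℝ} {p : ℝ × ℝ} (hd : DifferentiableAt ℝ u p) :
    pdy u p = fderiv ℝ u p (0, 1) := (hasDerivAt_sec2 hd).deriv

section calc2d
variable {q : ℝ × ℝ → ℝ} {V : Set (ℝ × ℝ)} (hV : IsOpen V) (hq : ContDiffOn ℝ 2 q V)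
include hV hq

lemma q_diffAt {z : ℝ × ℝ} (hz : z ∈ V) : DifferentiableAt ℝ q z :=
  (hq.differentiableOn (by norm_num)).differentiableAt (hV.mem_nhds hz)

lemma fderiv_q_cd : ContDiffOn ℝ 1 (fun z => fderiv ℝ q z) V :=
  hq.fderiv_of_isOpen hV (by norm_num)

lemma Qx_diffAt {z : ℝ × ℝ} (hz : z ∈ V) :
    DifferentiableAt ℝ (fun w => fderiv ℝ q w (1, 0)) z := by
  have h1 : ContDiffOn ℝ 1 (fun w => fderiv ℝ q w (1, 0)) V :=
    (fderiv_q_cd hV hq).clm_apply contDiffOn_const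
  exact (h1.differentiableOn (by norm_num)).differentiableAt (hV.mem_nhds hz)

lemma Qy_diffAt {z : ℝ × ℝ} (hz : z ∈ V) :
    DifferentiableAt ℝ (fun w => fderiv ℝ q w (0, 1)) z := by
  have h1 : ContDiffOn ℝ 1 (fun w => fderiv ℝ q w (0, 1)) V :=
    (fderiv_q_cd hV hq).clm_apply contDiffOn_const
  exact (h1.differentiableOn (by norm_num)).differentiableAt (hV.mem_nhds hz)

lemma pdx_q_eventually_eq {p : ℝ × ℝ} (hp : p ∈ V) :
    (fun x => pdx q (x, p.2)) =ᶠ[nhds p.1] (fun x => fderiv ℝ q (x, p.2) (1, 0)) := by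
  have hV1 : ∀ᶠ x in nhds p.1, (x, p.2) ∈ V := by
    have hcont : Continuous (fun x : ℝ => (x, p.2)) := continuous_id.prodMk continuous_const
    have : V ∈ nhds ((p.1, p.2) : ℝ × ℝ) := hV.mem_nhds (by simpa using hp)
    exact hcont.continuousAt.preimage_mem_nhds this
  filter_upwards [hV1] with x hx
  exact pdx_eq_fderiv (q_diffAt hV hq hx)

lemma pdy_q_eventually_eq {p : ℝ × ℝ} (hp : p ∈ V) :
    (fun y => pdy q (p.1, y)) =ᶠ[nhds p.2] (fun y => fderiv ℝ q (p.1, y) (0, 1)) := by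
  have hV1 : ∀ᶠ y in nhds p.2, (p.1, y) ∈ V := by
    have hcont : Continuous (fun y : ℝ => (p.1, y)) := continuous_const.prodMk continuous_id
    have : V ∈ nhds ((p.1, p.2) : ℝ × ℝ) := hV.mem_nhds (by simpa using hp)
    exact hcont.continuousAt.preimage_mem_nhds this
  filter_upwards [hV1] with y hy
  exact pdy_eq_fderiv (q_diffAt hV hq hy)

/-- The function `x ↦ ∂₁q(x, p.2)` has a derivative at `p.1`, namely `∂₁∂₁q(p)`. -/
lemma hasDerivAt_pdx_pdx {p : ℝ × ℝ} (hp : p ∈ V) :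
    HasDerivAt (fun x => pdx q (x, p.2)) (pdx (pdx q) p) p.1 := by
  have h1 : HasDerivAt (fun x => fderiv ℝ q (x, p.2) (1, 0))
      (fderiv ℝ (fun w => fderiv ℝ q w (1, 0)) p (1, 0)) p.1 := by
    have := hasDerivAt_sec1 (Qx_diffAt hV hq hp)
    simpa using this
  have h2 : HasDerivAt (fun x => pdx q (x, p.2))
      (fderiv ℝ (fun w => fderiv ℝ q w (1, 0)) p (1, 0)) p.1 :=
    h1.congr_of_eventuallyEq (pdx_q_eventually_eq hV hq hp)
  have h3 : pdx (pdx q) p = fderiv ℝ (fun w => fderiv ℝ q w (1, 0)) p (1, 0) := h2.deriv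
  rw [h3]; exact h2

lemma hasDerivAt_pdy_pdy {p : ℝ × ℝ} (hp : p ∈ V) :
    HasDerivAt (fun y => pdy q (p.1, y)) (pdy (pdy q) p) p.2 := by
  have h1 : HasDerivAt (fun y => fderiv ℝ q (p.1, y) (0, 1))
      (fderiv ℝ (fun w => fderiv ℝ q w (0, 1)) p (0, 1)) p.2 := by
    have := hasDerivAt_sec2 (Qy_diffAt hV hq hp)
    simpa using this
  have h2 : HasDerivAt (fun y => pdy q (p.1, y))
      (fderiv ℝ (fun w => fderiv ℝ q w (0, 1)) p (0, 1)) p.2 :=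
    h1.congr_of_eventuallyEq (pdy_q_eventually_eq hV hq hp)
  have h3 : pdy (pdy q) p = fderiv ℝ (fun w => fderiv ℝ q w (0, 1)) p (0, 1) := h2.deriv
  rw [h3]; exact h2

/-- Sections of `q` itself, with derivative written as `pdx q`. -/
lemma hasDerivAt_q_sec1 {z : ℝ × ℝ} (hz : z ∈ V) :
    HasDerivAt (fun x => q (x, z.2)) (pdx q z) z.1 := by
  have := hasDerivAt_sec1 (q_diffAt hV hq hz)
  rwa [← pdx_eq_fderiv (q_diffAt hV hq hz)] at this

lemma hasDerivAt_q_sec2 {z : ℝ × ℝ} (hz : z ∈ V) :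
    HasDerivAt (fun y => q (z.1, y)) (pdy q z) z.2 := by
  have := hasDerivAt_sec2 (q_diffAt hV hq hz)
  rwa [← pdy_eq_fderiv (q_diffAt hV hq hz)] at this

variable {γ : ℝ} (hγ : 1 < γ) {U : Set (ℝ × ℝ)} (hU : IsOpen U) (hUV : U ⊆ V)
  (hrange : ∀ z ∈ U, q z ∈ Ioo 0 (qmaxF γ))
include hγ hU hUV hrange

lemma pdx_Aq {z : ℝ × ℝ} (hz : z ∈ U) :
    pdx (fun w => Afun γ (q w)) z = gA γ (q z) * pdx q z := by
  have h1 : HasDerivAt (fun x => Afun γ (q (x, z.2))) (gA γ (q z) * pdx q z) z.1 := by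
    have h2 := (Afun_hasDerivAt hγ (hrange z hz)).comp z.1
      (by simpa using hasDerivAt_q_sec1 hV hq (hUV hz))
    simpa [Function.comp_def] using h2
  exact h1.deriv

lemma pdy_Bq {z : ℝ × ℝ} (hz : z ∈ U) :
    pdy (fun w => Bfun γ (q w)) z = gB γ (q z) * pdy q z := by
  have h1 : HasDerivAt (fun y => Bfun γ (q (z.1, y))) (gB γ (q z) * pdy q z) z.2 := by
    have h2 := (Bfun_hasDerivAt hγ (hrange z hz)).comp z.2
      (by simpa using hasDerivAt_q_sec2 hV hq (hUV hz))
    simpa [Function.comp_def] using h2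
  exact h1.deriv

lemma pdx_pdx_Aq {p : ℝ × ℝ} (hp : p ∈ U) :
    pdx (pdx (fun w => Afun γ (q w))) p
      = deriv (gA γ) (q p) * (pdx q p) ^ 2 + gA γ (q p) * pdx (pdx q) p := by
  -- the first partial agrees near p.1 with an explicit product
  have hev : (fun x => pdx (fun w => Afun γ (q w)) (x, p.2))
      =ᶠ[nhds p.1] (fun x => gA γ (q (x, p.2)) * pdx q (x, p.2)) := by
    have hU1 : ∀ᶠ x in nhds p.1, (x, p.2) ∈ U := by
      have hcont : Continuous (fun x : ℝ => (x, p.2)) := continuous_id.prodMk continuous_const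
      have : U ∈ nhds ((p.1, p.2) : ℝ × ℝ) := hU.mem_nhds (by simpa using hp)
      exact hcont.continuousAt.preimage_mem_nhds this
    filter_upwards [hU1] with x hx
    exact pdx_Aq hV hq hγ hU hUV hrange hx
  have hf1 : HasDerivAt (fun x => gA γ (q (x, p.2)))
      (deriv (gA γ) (q p) * pdx q p) p.1 := by
    have := (gA_hasDerivAt hγ (hrange p hp)).comp p.1
      (by simpa using hasDerivAt_q_sec1 hV hq (hUV hp))
    simpa [Function.comp_def] using this
  have hf2 : HasDerivAt (fun x => pdx q (x, p.2)) (pdx (pdx q) p) p.1 :=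
    hasDerivAt_pdx_pdx hV hq (hUV hp)
  have hprod := hf1.mul hf2
  have h3 : HasDerivAt (fun x => pdx (fun w => Afun γ (q w)) (x, p.2))
      (deriv (gA γ) (q p) * pdx q p * pdx q p + gA γ (q (p.1, p.2)) * pdx (pdx q) p) p.1 :=
    hprod.congr_of_eventuallyEq hev
  have h4 := h3.deriv
  rw [show pdx (pdx (fun w => Afun γ (q w))) p
      = deriv (fun x => pdx (fun w => Afun γ (q w)) (x, p.2)) p.1 from rfl, h4]
  have : ((p.1, p.2) : ℝ × ℝ) = p := rfl
  rw [this]; ring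

lemma pdy_pdy_Bq {p : ℝ × ℝ} (hp : p ∈ U) :
    pdy (pdy (fun w => Bfun γ (q w))) p
      = deriv (gB γ) (q p) * (pdy q p) ^ 2 + gB γ (q p) * pdy (pdy q) p := by
  have hev : (fun y => pdy (fun w => Bfun γ (q w)) (p.1, y))
      =ᶠ[nhds p.2] (fun y => gB γ (q (p.1, y)) * pdy q (p.1, y)) := by
    have hU1 : ∀ᶠ y in nhds p.2, (p.1, y) ∈ U := by
      have hcont : Continuous (fun y : ℝ => (p.1, y)) := continuous_const.prodMk continuous_id
      have : U ∈ nhds ((p.1, p.2) : ℝ × ℝ) := hU.mem_nhds (by simpa using hp)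
      exact hcont.continuousAt.preimage_mem_nhds this
    filter_upwards [hU1] with y hy
    exact pdy_Bq hV hq hγ hU hUV hrange hy
  have hf1 : HasDerivAt (fun y => gB γ (q (p.1, y)))
      (deriv (gB γ) (q p) * pdy q p) p.2 := by
    have := (gB_hasDerivAt hγ (hrange p hp)).comp p.2
      (by simpa using hasDerivAt_q_sec2 hV hq (hUV hp))
    simpa [Function.comp_def] using this
  have hf2 : HasDerivAt (fun y => pdy q (p.1, y)) (pdy (pdy q) p) p.2 :=
    hasDerivAt_pdy_pdy hV hq (hUV hp)
  have hprod := hf1.mul hf2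
  have h3 : HasDerivAt (fun y => pdy (fun w => Bfun γ (q w)) (p.1, y))
      (deriv (gB γ) (q p) * pdy q p * pdy q p + gB γ (q (p.1, p.2)) * pdy (pdy q) p) p.2 :=
    hprod.congr_of_eventuallyEq hev
  have h4 := h3.deriv
  rw [show pdy (pdy (fun w => Bfun γ (q w))) p
      = deriv (fun y => pdy (fun w => Bfun γ (q w)) (p.1, y)) p.2 from rfl, h4]
  have : ((p.1, p.2) : ℝ × ℝ) = p := rfl
  rw [this]; ring

/-- The quasilinear expansion of the Chaplygin equation. -/
lemma pde_expand {p : ℝ × ℝ} (hp : p ∈ U) (hchap : chap γ q p) :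
    gA γ (q p) * pdx (pdx q) p + deriv (gA γ) (q p) * (pdx q p) ^ 2
      + gB γ (q p) * pdy (pdy q) p + deriv (gB γ) (q p) * (pdy q p) ^ 2 = 0 := by
  have h1 := pdx_pdx_Aq hV hq hγ hU hUV hrange hp
  have h2 := pdy_pdy_Bq hV hq hγ hU hUV hrange hp
  rw [chap, h1, h2] at hchap
  linarith

end calc2d

/-- inner point of half-disk is inside big disk (≤ version) -/
lemma geo_le {u1 u2 w1 w2 r : ℝ} (hr : 0 < r) (hu : u1^2 + u2^2 ≤ (r/2)^2)
    (hw : w1^2 + w2^2 = r^2) : (u1 + w1/2)^2 + (u2 + w2/2)^2 ≤ r^2 := by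
  nlinarith [sq_nonneg (u1*w2 - u2*w1), sq_nonneg (u1*w1 + u2*w2 - r^2/2), sq_nonneg r,
    sq_nonneg (u1*w1 + u2*w2)]

/-- equality case: tangency only at `P` -/
lemma geo_eq {u1 u2 w1 w2 r : ℝ} (hr : 0 < r) (hu : u1^2 + u2^2 ≤ (r/2)^2)
    (hw : w1^2 + w2^2 = r^2) (heq : (u1 + w1/2)^2 + (u2 + w2/2)^2 = r^2) :
    u1 = w1/2 ∧ u2 = w2/2 := by
  have ha : u1^2 + u2^2 = r^2/4 := by
    nlinarith [sq_nonneg (u1*w2 - u2*w1), sq_nonneg (u1*w1 + u2*w2 - r^2/2), sq_nonneg r]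
  have hS : u1*w1 + u2*w2 = r^2/2 := by nlinarith
  have hcross : (u1*w2 - u2*w1)^2 = 0 := by nlinarith
  have hcross' : u1*w2 - u2*w1 = 0 := by
    exact pow_eq_zero_iff (n := 2) (by norm_num) |>.1 hcross
  have hr2 : r^2 ≠ 0 := by positivity
  constructor
  · have h1 : u1 * r^2 = w1/2 * r^2 := by
      have hid : u1 * (w1^2+w2^2) - w1*(u1*w1+u2*w2) - w2*(u1*w2 - u2*w1) = 0 := by ring
      rw [hw, hS, hcross'] at hid
      linarith
    exact mul_right_cancel₀ hr2 h1
  · have h1 : u2 * r^2 = w2/2 * r^2 := by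
      have hid : u2 * (w1^2+w2^2) - w2*(u1*w1+u2*w2) + w1*(u1*w2 - u2*w1) = 0 := by ring
      rw [hw, hS, hcross'] at hid
      linarith
    exact mul_right_cancel₀ hr2 h1

/-- strict version -/
lemma geo_lt {u1 u2 w1 w2 r : ℝ} (hr : 0 < r) (hu : u1^2 + u2^2 ≤ (r/2)^2)
    (hw : w1^2 + w2^2 = r^2) (hne : ¬ (u1 = w1/2 ∧ u2 = w2/2)) :
    (u1 + w1/2)^2 + (u2 + w2/2)^2 < r^2 := by
  rcases lt_or_eq_of_le (geo_le hr hu hw) with h | h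
  · exact h
  · exact absurd (geo_eq hr hu hw h) hne

/-- boundary point is in the closure of the open disk -/
lemma P_mem_closure {cen P : ℝ × ℝ} {r : ℝ} (hr : 0 < r)
    (hP : (P.1 - cen.1)^2 + (P.2 - cen.2)^2 = r^2) :
    P ∈ closure {p : ℝ × ℝ | (p.1 - cen.1)^2 + (p.2 - cen.2)^2 < r^2} := by
  have hf : Continuous (fun t : ℝ => ((cen.1 + t*(P.1-cen.1), cen.2 + t*(P.2-cen.2)) : ℝ × ℝ)) := by
    fun_prop
  have hft : Tendsto (fun t : ℝ => ((cen.1 + t*(P.1-cen.1), cen.2 + t*(P.2-cen.2)) : ℝ × ℝ))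
      (nhdsWithin 1 (Iio 1)) (nhds P) := by
    have h1 : ((cen.1 + 1*(P.1-cen.1), cen.2 + 1*(P.2-cen.2)) : ℝ × ℝ) = P := by
      ext <;> simp <;> ring
    have h2 := (hf.tendsto 1).mono_left (nhdsWithin_le_nhds (s := Iio 1))
    rwa [h1] at h2
  apply mem_closure_of_tendsto hft
  filter_upwards [Ioo_mem_nhdsLT_of_mem (⟨by norm_num, le_refl (1:ℝ)⟩ : (1:ℝ) ∈ Ioc 0 1)]
    with t ht
  show _ < _
  have : (cen.1 + t*(P.1-cen.1) - cen.1)^2 + (cen.2 + t*(P.2-cen.2) - cen.2)^2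
      = t^2 * r^2 := by rw [← hP]; ring
  rw [this]
  have ht2 : t^2 < 1 := by nlinarith [ht.1, ht.2]
  have hr2 : (0:ℝ) < r^2 := by positivity
  nlinarith [mul_lt_mul_of_pos_right ht2 hr2]


set_option maxHeartbeats 1000000 in
/-- Hopf-type boundary point lemma at a sonic point on the boundary
of a subsonic disk (Lemma `WWlemma`). -/
theorem stmt_10 (γ : ℝ) (hγ : 1 < γ)
    (r : ℝ) (hr : 0 < r) (cen : ℝ × ℝ)
    (V : Set (ℝ × ℝ)) (hV : IsOpen V)
    (hDV : closure (diskC cen r) ⊆ V)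
    (q : ℝ × ℝ → ℝ) (hq : ContDiffOn ℝ 2 q V)
    (hsub : ∀ p ∈ diskC cen r, 0 < q p ∧ q p < cstar γ)
    (hPDE : ∀ p ∈ diskC cen r, chap γ q p)
    (P : ℝ × ℝ) (hP : (P.1 - cen.1) ^ 2 + (P.2 - cen.2) ^ 2 = r ^ 2)
    (hson : q P = cstar γ)
    (hdir : P.2 ≠ cen.2)
    (μ : ℝ × ℝ) (hunit : μ.1 ^ 2 + μ.2 ^ 2 = 1)
    (hacute : 0 < μ.1 * (P.1 - cen.1) + μ.2 * (P.2 - cen.2)) :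
    0 < μ.1 * pdx q P + μ.2 * pdy q P := by
  have hcpos : 0 < cstar γ := cstar_pos hγ
  have hcqm : cstar γ < qmaxF γ := cstar_lt_qmax hγ
  have hDopen : IsOpen (diskC cen r) := by
    have hrw : diskC cen r
        = (fun p : ℝ × ℝ => (p.1 - cen.1)^2 + (p.2 - cen.2)^2) ⁻¹' (Iio (r^2)) := rfl
    rw [hrw]
    exact IsOpen.preimage (by fun_prop) isOpen_Iio
  have hDV' : diskC cen r ⊆ V := fun p hp => hDV (subset_closure hp)
  have hPV : P ∈ V := hDV (P_mem_closure hr hP)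
  obtain ⟨w1, hw1⟩ : ∃ y : ℝ, y = P.1 - cen.1 := ⟨_, rfl⟩
  obtain ⟨w2, hw2⟩ : ∃ y : ℝ, y = P.2 - cen.2 := ⟨_, rfl⟩
  rw [← hw1, ← hw2] at hP hacute
  obtain ⟨a', ha'⟩ : ∃ y : ℝ, y = cen.1 + w1/2 := ⟨_, rfl⟩
  obtain ⟨b', hb'⟩ : ∃ y : ℝ, y = cen.2 + w2/2 := ⟨_, rfl⟩
  obtain ⟨rr, hrr'⟩ : ∃ y : ℝ, y = r/2 := ⟨_, rfl⟩
  have hrr : 0 < rr := by rw [hrr']; linarith only [hr]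
  have hrrsq : rr^2 = r^2/4 := by rw [hrr']; ring
  have hsp1 : ∀ x : ℝ, x - cen.1 = (x - a') + w1/2 := by intro x; rw [ha']; ring
  have hsp2 : ∀ y : ℝ, y - cen.2 = (y - b') + w2/2 := by intro y; rw [hb']; ring
  have hKdisk : ∀ p : ℝ × ℝ, (p.1 - a')^2 + (p.2 - b')^2 ≤ rr^2 →
      (p.1 - cen.1)^2 + (p.2 - cen.2)^2 ≤ r^2 := by
    intro p hp
    rw [hsp1 p.1, hsp2 p.2]
    have hp' : (p.1-a')^2 + (p.2-b')^2 ≤ (r/2)^2 := by rw [← hrr']; exact hp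
    exact geo_le hr hp' hP
  have hKeqP : ∀ p : ℝ × ℝ, (p.1 - a')^2 + (p.2 - b')^2 ≤ rr^2 →
      (p.1-cen.1)^2 + (p.2-cen.2)^2 = r^2 → p = P := by
    intro p h1 h2
    have h1' : (p.1-a')^2 + (p.2-b')^2 ≤ (r/2)^2 := by rw [← hrr']; exact h1
    rw [hsp1 p.1, hsp2 p.2] at h2
    obtain ⟨e1, e2⟩ := geo_eq hr h1' hP h2
    have h3 : p.1 = P.1 := by rw [ha'] at e1; rw [hw1] at e1; linarith only [e1]
    have h4 : p.2 = P.2 := by rw [hb'] at e2; rw [hw2] at e2; linarith only [e2]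
    exact Prod.ext h3 h4
  have hKD : ∀ p : ℝ × ℝ, (p.1 - a')^2 + (p.2 - b')^2 ≤ rr^2 → p ≠ P → p ∈ diskC cen r := by
    intro p h1 hne
    rcases lt_or_eq_of_le (hKdisk p h1) with h | h
    · exact h
    · exact absurd (hKeqP p h1 h) hne
  set K := {p : ℝ × ℝ | rr^2/4 ≤ (p.1 - a')^2 + (p.2 - b')^2 ∧
    (p.1 - a')^2 + (p.2 - b')^2 ≤ rr^2} with hK
  have hKV : ∀ p ∈ K, p ∈ V := by
    intro p hp
    by_cases hpe : p = P
    · rw [hpe]; exact hPV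
    · exact hDV' (hKD p hp.2 hpe)
  have hKclosed : IsClosed K := by
    have hrw : K = (fun p : ℝ×ℝ => (p.1 - a')^2 + (p.2 - b')^2) ⁻¹'
      (Icc (rr^2/4) (rr^2)) := rfl
    rw [hrw]
    exact IsClosed.preimage (by fun_prop) isClosed_Icc
  have hKcomp : IsCompact K := by
    apply IsCompact.of_isClosed_subset
      (isCompact_Icc (a := ((a'-rr, b'-rr) : ℝ×ℝ)) (b := ((a'+rr, b'+rr) : ℝ×ℝ))) hKclosed
    intro p hp
    have hp2 : (p.1-a')^2 + (p.2-b')^2 ≤ rr^2 := hp.2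
    have h1 : (p.1-a')^2 ≤ rr^2 := by nlinarith only [hp2, sq_nonneg (p.2-b')]
    have h2 : (p.2-b')^2 ≤ rr^2 := by nlinarith only [hp2, sq_nonneg (p.1-a')]
    rw [Set.mem_Icc]
    refine ⟨⟨?_, ?_⟩, ⟨?_, ?_⟩⟩
    · show a' - rr ≤ p.1
      nlinarith only [h1, sq_nonneg (p.1 - a' + rr), hrr]
    · show b' - rr ≤ p.2
      nlinarith only [h2, sq_nonneg (p.2 - b' + rr), hrr]
    · show p.1 ≤ a' + rr
      nlinarith only [h1, sq_nonneg (p.1 - a' - rr), hrr]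
    · show p.2 ≤ b' + rr
      nlinarith only [h2, sq_nonneg (p.2 - b' - rr), hrr]
  have e1P : P.1 - a' = w1/2 := by rw [ha', hw1]; ring
  have e2P : P.2 - b' = w2/2 := by rw [hb', hw2]; ring
  have hddP : (P.1 - a')^2 + (P.2 - b')^2 = rr^2 := by
    rw [e1P, e2P, hrrsq, ← hP]; ring
  have hPK : P ∈ K := by
    refine ⟨?_, le_of_eq hddP⟩
    rw [hddP]; nlinarith only [sq_nonneg rr, hrr]
  have qcontK : ContinuousOn q K := (hq.continuousOn).mono (fun p hp => hKV p hp)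
  obtain ⟨z0, hz0K, hz0m⟩ := hKcomp.exists_isMinOn ⟨P, hPK⟩ qcontK
  have hδ : 0 < q z0 := by
    by_cases h : z0 = P
    · rw [h, hson]; exact hcpos
    · exact (hsub z0 (hKD z0 hz0K.2 h)).1
  have hqlow : ∀ p ∈ K, q z0 ≤ q p := fun p hp => hz0m hp
  have hqhigh : ∀ p ∈ K, q p ≤ cstar γ := by
    intro p hp
    by_cases h : p = P
    · rw [h, hson]
    · exact le_of_lt (hsub p (hKD p hp.2 h)).2
  have hrangeK : ∀ p ∈ K, q p ∈ Ioo 0 (qmaxF γ) := fun p hp =>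
    ⟨lt_of_lt_of_le hδ (hqlow p hp), lt_of_le_of_lt (hqhigh p hp) hcqm⟩
  have hrangeD : ∀ z ∈ diskC cen r, q z ∈ Ioo 0 (qmaxF γ) := fun z hz =>
    ⟨(hsub z hz).1, lt_trans (hsub z hz).2 hcqm⟩
  have contA : ContinuousOn (fun p => gA γ (q p)) K :=
    ((gA_contDiffOn hγ).continuousOn).comp qcontK hrangeK
  have contB : ContinuousOn (fun p => gB γ (q p)) K :=
    ((gB_contDiffOn hγ).continuousOn).comp qcontK hrangeK
  have contA' : ContinuousOn (fun p => deriv (gA γ) (q p)) K :=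
    (deriv_gA_contOn hγ).comp qcontK hrangeK
  have contB' : ContinuousOn (fun p => deriv (gB γ) (q p)) K :=
    (deriv_gB_contOn hγ).comp qcontK hrangeK
  obtain ⟨zA, hzAK, hzAm⟩ := hKcomp.exists_isMaxOn ⟨P, hPK⟩ contA
  obtain ⟨zB, hzBK, hzBm⟩ := hKcomp.exists_isMaxOn ⟨P, hPK⟩ contB
  obtain ⟨Ma, hMa'⟩ : ∃ y : ℝ, y = gA γ (q zA) := ⟨_, rfl⟩
  obtain ⟨Mb, hMb'⟩ : ∃ y : ℝ, y = gB γ (q zB) := ⟨_, rfl⟩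
  have hMa : ∀ p ∈ K, gA γ (q p) ≤ Ma := fun p hp => by rw [hMa']; exact hzAm hp
  have hMb : ∀ p ∈ K, gB γ (q p) ≤ Mb := fun p hp => by rw [hMb']; exact hzBm hp
  obtain ⟨zC, hzCK, hzCm⟩ := hKcomp.exists_isMaxOn ⟨P, hPK⟩ ((contA'.abs).add (contB'.abs))
  obtain ⟨Ca, hCa'⟩ : ∃ y : ℝ, y = |deriv (gA γ) (q zC)| + |deriv (gB γ) (q zC)| := ⟨_, rfl⟩
  have hCa : ∀ p ∈ K, |deriv (gA γ) (q p)| + |deriv (gB γ) (q p)| ≤ Ca := fun p hp => by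
    rw [hCa']; exact hzCm hp
  have hCa0 : 0 ≤ Ca := le_trans (by positivity) (hCa P hPK)
  obtain ⟨zb, hzbK, hzbm⟩ := hKcomp.exists_isMinOn ⟨P, hPK⟩ contB
  obtain ⟨β, hβ'⟩ : ∃ y : ℝ, y = gB γ (q zb) := ⟨_, rfl⟩
  have hβpos : 0 < β := by rw [hβ']; exact gB_pos hγ (hrangeK zb hzbK)
  have hβ : ∀ p ∈ K, β ≤ gB γ (q p) := fun p hp => by rw [hβ']; exact hzbm hp
  have hw2ne : w2 ≠ 0 := by rw [hw2]; exact sub_ne_zero.2 hdir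
  have hw2abs : 0 < |w2| := abs_pos.2 hw2ne
  obtain ⟨c0, hc0'⟩ : ∃ y : ℝ, y = min (|w2|/4) (rr/4) := ⟨_, rfl⟩
  have hc0 : 0 < c0 := by
    rw [hc0']; exact lt_min (by linarith only [hw2abs]) (by linarith only [hrr])
  have hc0rr : c0 ≤ rr/4 := by rw [hc0']; exact min_le_right _ _
  have hc0w : c0 ≤ |w2|/4 := by rw [hc0']; exact min_le_left _ _
  have hPY : |P.2 - b'| = |w2|/2 := by rw [e2P, abs_div]; simp
  set S := K ∩ {p : ℝ × ℝ | |p.2 - b'| ≤ c0} with hS'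
  have hSD : S ⊆ diskC cen r := by
    intro p hp
    have hne : p ≠ P := by
      intro he
      have h2 := hp.2
      rw [he] at h2
      simp only [Set.mem_setOf_eq] at h2
      rw [hPY] at h2
      linarith only [h2, hc0w, hw2abs]
    exact hKD p hp.1.2 hne
  obtain ⟨lam, hlam, hlamS⟩ : ∃ l, 0 < l ∧ ∀ p ∈ S, l ≤ gA γ (q p) := by
    by_cases hSne : S.Nonempty
    · have hScomp : IsCompact S :=
        hKcomp.inter_right (isClosed_le (by fun_prop) continuous_const)
      obtain ⟨zl, hzlS, hzlm⟩ := hScomp.exists_isMinOn hSne (contA.mono inter_subset_left)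
      refine ⟨gA γ (q zl), ?_, fun p hp => hzlm hp⟩
      exact gA_pos hγ ⟨(hsub zl (hSD hzlS)).1, (hsub zl (hSD hzlS)).2⟩
    · exact ⟨1, one_pos, fun p hp => absurd ⟨p, hp⟩ hSne⟩
  obtain ⟨κ, hκ'⟩ : ∃ y : ℝ, y = min (lam*(rr^2/8)) (β*c0^2) := ⟨_, rfl⟩
  have hκ : 0 < κ := by
    rw [hκ']
    apply lt_min
    · exact mul_pos hlam (by nlinarith only [mul_pos hrr hrr])
    · exact mul_pos hβpos (by nlinarith only [mul_pos hc0 hc0])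
  have hKey : ∀ p ∈ K, p ∈ diskC cen r →
      κ ≤ gA γ (q p)*(p.1-a')^2 + gB γ (q p)*(p.2-b')^2 := by
    intro p hpK hpD
    have hgBp : 0 < gB γ (q p) := gB_pos hγ (hrangeK p hpK)
    have hgAp : 0 < gA γ (q p) := gA_pos hγ ⟨(hsub p hpD).1, (hsub p hpD).2⟩
    by_cases hY : |p.2 - b'| ≤ c0
    · have h1 : lam ≤ gA γ (q p) := hlamS p ⟨hpK, hY⟩
      have habs := abs_le.1 hY
      have h2 : (p.2-b')^2 ≤ c0^2 := by nlinarith only [habs.1, habs.2]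
      have h3 : rr^2/4 ≤ (p.1 - a')^2 + (p.2 - b')^2 := hpK.1
      have hc0sq : c0^2 ≤ rr^2/16 := by nlinarith only [hc0, hc0rr, hrr]
      have h4 : rr^2/8 ≤ (p.1-a')^2 := by linarith only [h3, h2, hc0sq, sq_nonneg rr]
      calc κ ≤ lam*(rr^2/8) := by rw [hκ']; exact min_le_left _ _
        _ ≤ gA γ (q p)*(p.1-a')^2 := by
            linarith only [mul_le_mul h1 h4 (by positivity) hgAp.le]
        _ ≤ _ := by linarith only [mul_nonneg hgBp.le (sq_nonneg (p.2-b'))]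
    · push_neg at hY
      have h2 : c0^2 ≤ (p.2-b')^2 := by
        nlinarith only [hY, hc0, abs_nonneg (p.2-b'), sq_abs (p.2-b')]
      calc κ ≤ β*c0^2 := by rw [hκ']; exact min_le_right _ _
        _ ≤ gB γ (q p)*(p.2-b')^2 := by
            linarith only [mul_le_mul (hβ p hpK) h2 (by positivity)
              (le_trans hβpos.le (hβ p hpK))]
        _ ≤ _ := by linarith only [mul_nonneg hgAp.le (sq_nonneg (p.1-a'))]
  obtain ⟨α, hα'⟩ : ∃ y : ℝ, y = (|Ma| + |Mb| + 1)/κ := ⟨_, rfl⟩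
  have hα : 0 < α := by
    rw [hα']; exact div_pos (by positivity) hκ
  have hακ : α*κ = |Ma| + |Mb| + 1 := by
    rw [hα']; exact div_mul_cancel₀ _ hκ.ne'
  -- barrier
  obtain ⟨W, hWdef⟩ : ∃ f : ℝ × ℝ → ℝ,
      f = fun p : ℝ × ℝ => Real.exp (-α*((p.1-a')^2+(p.2-b')^2)) - Real.exp (-α*rr^2) :=
    ⟨_, rfl⟩
  have hWcont : Continuous W := by rw [hWdef]; fun_prop
  have hWx : ∀ p : ℝ × ℝ, HasDerivAt (fun x => W (x, p.2))
      (-(2*α)*(p.1-a') * Real.exp (-α*((p.1-a')^2+(p.2-b')^2))) p.1 := by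
    intro p
    have h0 : HasDerivAt (fun x : ℝ => (x-a')^2 + (p.2-b')^2) (2*(p.1-a')) p.1 := by
      simpa using (((hasDerivAt_id p.1).sub_const a').pow 2).add_const ((p.2-b')^2)
    have h1 : HasDerivAt (fun x : ℝ => -α*((x-a')^2+(p.2-b')^2)) (-α*(2*(p.1-a'))) p.1 :=
      h0.const_mul (-α)
    have h2 := (h1.exp).sub_const (Real.exp (-α*rr^2))
    rw [hWdef]
    refine h2.congr_deriv ?_
    ring
  have hWy : ∀ p : ℝ × ℝ, HasDerivAt (fun y => W (p.1, y))
      (-(2*α)*(p.2-b') * Real.exp (-α*((p.1-a')^2+(p.2-b')^2))) p.2 := by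
    intro p
    have h0 : HasDerivAt (fun y : ℝ => (p.1-a')^2 + (y-b')^2) (2*(p.2-b')) p.2 := by
      simpa using ((((hasDerivAt_id p.2).sub_const b').pow 2).const_add ((p.1-a')^2))
    have h1 : HasDerivAt (fun y : ℝ => -α*((p.1-a')^2+(y-b')^2)) (-α*(2*(p.2-b'))) p.2 :=
      h0.const_mul (-α)
    have h2 := (h1.exp).sub_const (Real.exp (-α*rr^2))
    rw [hWdef]
    refine h2.congr_deriv ?_
    ring
  have hWxx : ∀ p : ℝ × ℝ, HasDerivAt
      (fun x => -(2*α)*(x-a') * Real.exp (-α*((x-a')^2+(p.2-b')^2)))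
      ((4*α^2*(p.1-a')^2 - 2*α) * Real.exp (-α*((p.1-a')^2+(p.2-b')^2))) p.1 := by
    intro p
    have hlin : HasDerivAt (fun x : ℝ => -(2*α)*(x-a')) (-(2*α)) p.1 := by
      simpa using ((hasDerivAt_id p.1).sub_const a').const_mul (-(2*α))
    have h0 : HasDerivAt (fun x : ℝ => (x-a')^2 + (p.2-b')^2) (2*(p.1-a')) p.1 := by
      simpa using (((hasDerivAt_id p.1).sub_const a').pow 2).add_const ((p.2-b')^2)
    have h1 : HasDerivAt (fun x : ℝ => -α*((x-a')^2+(p.2-b')^2)) (-α*(2*(p.1-a'))) p.1 :=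
      h0.const_mul (-α)
    have h2 := hlin.mul h1.exp
    refine h2.congr_deriv ?_
    ring
  have hWyy : ∀ p : ℝ × ℝ, HasDerivAt
      (fun y => -(2*α)*(y-b') * Real.exp (-α*((p.1-a')^2+(y-b')^2)))
      ((4*α^2*(p.2-b')^2 - 2*α) * Real.exp (-α*((p.1-a')^2+(p.2-b')^2))) p.2 := by
    intro p
    have hlin : HasDerivAt (fun y : ℝ => -(2*α)*(y-b')) (-(2*α)) p.2 := by
      simpa using ((hasDerivAt_id p.2).sub_const b').const_mul (-(2*α))
    have h0 : HasDerivAt (fun y : ℝ => (p.1-a')^2 + (y-b')^2) (2*(p.2-b')) p.2 := by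
      simpa using ((((hasDerivAt_id p.2).sub_const b').pow 2).const_add ((p.1-a')^2))
    have h1 : HasDerivAt (fun y : ℝ => -α*((p.1-a')^2+(y-b')^2)) (-α*(2*(p.2-b'))) p.2 :=
      h0.const_mul (-α)
    have h2 := hlin.mul h1.exp
    refine h2.congr_deriv ?_
    ring
  have hWle1 : ∀ p : ℝ × ℝ, W p ≤ 1 := by
    intro p
    rw [hWdef]
    have h1 : Real.exp (-α*((p.1-a')^2+(p.2-b')^2)) ≤ 1 := by
      rw [Real.exp_le_one_iff]
      nlinarith only [sq_nonneg (p.1-a'), sq_nonneg (p.2-b'), hα]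
    have h2 := Real.exp_pos (-α*rr^2)
    simp only []
    linarith only [h1, h2]
  have hWout : ∀ p : ℝ × ℝ, (p.1 - a')^2 + (p.2 - b')^2 = rr^2 → W p = 0 := by
    intro p hp
    rw [hWdef]
    simp only [hp, sub_self]
  -- the inner-sphere maximum of q
  have hp0K : ((a' + rr/2, b') : ℝ×ℝ) ∈ K ∧
      (((a' + rr/2 : ℝ) - a')^2 + ((b' : ℝ) - b')^2) = rr^2/4 := by
    have hd : (((a' + rr/2 : ℝ) - a')^2 + ((b' : ℝ) - b')^2) = rr^2/4 := by ring
    exact ⟨⟨le_of_eq hd.symm, by rw [hd]; nlinarith only [sq_nonneg rr, hrr]⟩, hd⟩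
  set T := K ∩ {p : ℝ×ℝ | (p.1 - a')^2 + (p.2 - b')^2 = rr^2/4} with hT'
  have hTcomp : IsCompact T :=
    hKcomp.inter_right (isClosed_eq (by fun_prop) continuous_const)
  obtain ⟨z1, hz1T, hz1m⟩ := hTcomp.exists_isMaxOn ⟨((a' + rr/2, b') : ℝ×ℝ), hp0K.1, hp0K.2⟩
    (qcontK.mono inter_subset_left)
  have hz1P : z1 ≠ P := by
    intro h
    have h2 := hz1T.2
    simp only [Set.mem_setOf_eq, h, hddP] at h2
    nlinarith only [h2, hrr]
  have hz1D : z1 ∈ diskC cen r := hKD z1 hz1T.1.2 hz1P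
  have hc1 : q z1 < cstar γ := (hsub z1 hz1D).2
  obtain ⟨ε0, hε0'⟩ : ∃ y : ℝ, y = cstar γ - q z1 := ⟨_, rfl⟩
  have hε0 : 0 < ε0 := by rw [hε0']; linarith only [hc1]
  obtain ⟨ε, hε'⟩ : ∃ y : ℝ, y = min ε0 (κ/(2*(Ca+1)*rr^2)) := ⟨_, rfl⟩
  have hε : 0 < ε := by
    rw [hε']
    exact lt_min hε0 (div_pos hκ (by nlinarith only [hCa0, mul_pos hrr hrr]))
  have hεa : ε ≤ ε0 := by rw [hε']; exact min_le_left _ _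
  have hεb : ε ≤ κ/(2*(Ca+1)*rr^2) := by rw [hε']; exact min_le_right _ _
  -- ===== core barrier estimate =====
  have hcore : ∀ p ∈ K, q p + ε * W p ≤ cstar γ := by
    obtain ⟨z, hzK, hzm⟩ := hKcomp.exists_isMaxOn ⟨P, hPK⟩
      (qcontK.add ((hWcont.continuousOn).const_smul ε))
    have hzmax : ∀ p ∈ K, q p + ε * W p ≤ q z + ε * W z := by
      intro p hp
      have h := hzm hp
      simpa [smul_eq_mul] using h
    suffices hz : q z + ε * W z ≤ cstar γ by
      intro p hp; exact le_trans (hzmax p hp) hz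
    rcases eq_or_lt_of_le hzK.2 with houter | hlt
    · rw [hWout z houter]
      simpa using hqhigh z hzK
    rcases eq_or_lt_of_le hzK.1 with hinner | hgt
    · have hzT : z ∈ T := ⟨hzK, hinner.symm⟩
      have h1 : q z ≤ q z1 := hz1m hzT
      have h2 : ε * W z ≤ ε := by
        have h := mul_le_mul_of_nonneg_left (hWle1 z) hε.le
        simpa using h
      have h3 : ε ≤ ε0 := hεa
      rw [hε0'] at h3
      linarith only [h1, h2, h3]
    exfalso
    have hzP : z ≠ P := by
      intro h
      rw [h, hddP] at hlt
      exact lt_irrefl _ hlt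
    have hzD : z ∈ diskC cen r := hKD z hlt.le hzP
    have hzV : z ∈ V := hKV z hzK
    have hUopen : IsOpen {p : ℝ×ℝ | rr^2/4 < (p.1 - a')^2 + (p.2 - b')^2 ∧
        (p.1 - a')^2 + (p.2 - b')^2 < rr^2} := by
      have hrw : {p : ℝ×ℝ | rr^2/4 < (p.1 - a')^2 + (p.2 - b')^2 ∧
          (p.1 - a')^2 + (p.2 - b')^2 < rr^2}
          = (fun p : ℝ×ℝ => (p.1 - a')^2 + (p.2 - b')^2) ⁻¹' (Ioo (rr^2/4) (rr^2)) := rfl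
      rw [hrw]
      exact IsOpen.preimage (by fun_prop) isOpen_Ioo
    have hlocmax : IsLocalMax (fun p => q p + ε * W p) z := by
      have hmem : {p : ℝ×ℝ | rr^2/4 < (p.1 - a')^2 + (p.2 - b')^2 ∧
          (p.1 - a')^2 + (p.2 - b')^2 < rr^2} ∈ nhds z := hUopen.mem_nhds ⟨hgt, hlt⟩
      filter_upwards [hmem] with y hy
      exact hzmax y ⟨hy.1.le, hy.2.le⟩
    -- x-direction
    have hlinex : ContinuousAt (fun x : ℝ => ((x, z.2) : ℝ×ℝ)) z.1 := by fun_prop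
    have hsecmax_x : IsLocalMax (fun x => q (x, z.2) + ε * W (x, z.2)) z.1 :=
      hlinex.eventually hlocmax
    have hevVx : ∀ᶠ x in nhds z.1, ((x, z.2) : ℝ×ℝ) ∈ V :=
      hlinex.preimage_mem_nhds (hV.mem_nhds hzV)
    have hf'x : ∀ᶠ x in nhds z.1, HasDerivAt (fun x' => q (x', z.2) + ε * W (x', z.2))
        (pdx q (x, z.2) + ε * (-(2*α)*(x-a') *
          Real.exp (-α*((x-a')^2+(z.2-b')^2)))) x := by
      filter_upwards [hevVx] with x hx
      exact (hasDerivAt_q_sec1 hV hq hx).add ((hWx (x, z.2)).const_mul ε)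
    have hdx : HasDerivAt (fun x => pdx q (x, z.2) + ε * (-(2*α)*(x-a') *
          Real.exp (-α*((x-a')^2+(z.2-b')^2))))
        (pdx (pdx q) z + ε * ((4*α^2*(z.1-a')^2 - 2*α) *
          Real.exp (-α*((z.1-a')^2+(z.2-b')^2)))) z.1 :=
      (hasDerivAt_pdx_pdx hV hq hzV).add ((hWxx z).const_mul ε)
    obtain ⟨hx0, hx2⟩ := local_max_second_deriv hsecmax_x hf'x hdx
    -- y-direction
    have hliney : ContinuousAt (fun y : ℝ => ((z.1, y) : ℝ×ℝ)) z.2 := by fun_prop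
    have hsecmax_y : IsLocalMax (fun y => q (z.1, y) + ε * W (z.1, y)) z.2 :=
      hliney.eventually hlocmax
    have hevVy : ∀ᶠ y in nhds z.2, ((z.1, y) : ℝ×ℝ) ∈ V :=
      hliney.preimage_mem_nhds (hV.mem_nhds hzV)
    have hf'y : ∀ᶠ y in nhds z.2, HasDerivAt (fun y' => q (z.1, y') + ε * W (z.1, y'))
        (pdy q (z.1, y) + ε * (-(2*α)*(y-b') *
          Real.exp (-α*((z.1-a')^2+(y-b')^2)))) y := by
      filter_upwards [hevVy] with y hy
      exact (hasDerivAt_q_sec2 hV hq hy).add ((hWy (z.1, y)).const_mul ε)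
    have hdy : HasDerivAt (fun y => pdy q (z.1, y) + ε * (-(2*α)*(y-b') *
          Real.exp (-α*((z.1-a')^2+(y-b')^2))))
        (pdy (pdy q) z + ε * ((4*α^2*(z.2-b')^2 - 2*α) *
          Real.exp (-α*((z.1-a')^2+(z.2-b')^2)))) z.2 :=
      (hasDerivAt_pdy_pdy hV hq hzV).add ((hWyy z).const_mul ε)
    obtain ⟨hy0, hy2⟩ := local_max_second_deriv hsecmax_y hf'y hdy
    have hpde := pde_expand hV hq hγ hDopen hDV' hrangeD hzD (hPDE z hzD)
    -- abbreviations
    obtain ⟨X, hX⟩ : ∃ y : ℝ, y = z.1 - a' := ⟨_, rfl⟩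
    obtain ⟨Y, hY⟩ : ∃ y : ℝ, y = z.2 - b' := ⟨_, rfl⟩
    obtain ⟨Ez, hEz⟩ : ∃ y : ℝ, y = Real.exp (-α*(X^2+Y^2)) := ⟨_, rfl⟩
    have hEzpos : 0 < Ez := by rw [hEz]; exact Real.exp_pos _
    have hEz1 : Ez ≤ 1 := by
      rw [hEz, Real.exp_le_one_iff]
      nlinarith only [sq_nonneg X, sq_nonneg Y, hα]
    have hx0' : pdx q z + ε * (-(2*α)*X*Ez) = 0 := by
      rw [hEz, hX, hY]; exact hx0
    have hy0' : pdy q z + ε * (-(2*α)*Y*Ez) = 0 := by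
      rw [hEz, hX, hY]; exact hy0
    have hxx2 : pdx (pdx q) z ≤ -(ε * ((4*α^2*X^2 - 2*α) * Ez)) := by
      rw [hEz, hX, hY]
      linarith only [hx2]
    have hyy2 : pdy (pdy q) z ≤ -(ε * ((4*α^2*Y^2 - 2*α) * Ez)) := by
      rw [hEz, hX, hY]
      linarith only [hy2]
    have hqx : pdx q z = ε*(2*α)*X*Ez := by linarith only [hx0']
    have hqy : pdy q z = ε*(2*α)*Y*Ez := by linarith only [hy0']
    have haa : 0 < gA γ (q z) := gA_pos hγ ⟨(hsub z hzD).1, (hsub z hzD).2⟩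
    have hbb : 0 < gB γ (q z) := gB_pos hγ (hrangeD z hzD)
    have hCaz := hCa z hzK
    have hdaCa : |deriv (gA γ) (q z)| ≤ Ca := by
      have h := abs_nonneg (deriv (gB γ) (q z)); linarith only [h, hCaz]
    have hdbCa : |deriv (gB γ) (q z)| ≤ Ca := by
      have h := abs_nonneg (deriv (gA γ) (q z)); linarith only [h, hCaz]
    have hKeyz : κ ≤ gA γ (q z)*X^2 + gB γ (q z)*Y^2 := by
      rw [hX, hY]; exact hKey z hzK hzD
    have hMaz : gA γ (q z) ≤ Ma := hMa z hzK
    have hMbz : gB γ (q z) ≤ Mb := hMb z hzK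
    have hddz2 : X^2 + Y^2 < rr^2 := by rw [hX, hY]; exact hlt
    have t1 : gA γ (q z) * pdx (pdx q) z
        ≤ gA γ (q z) * (-(ε * ((4*α^2*X^2 - 2*α) * Ez))) :=
      mul_le_mul_of_nonneg_left hxx2 haa.le
    have t2 : gB γ (q z) * pdy (pdy q) z
        ≤ gB γ (q z) * (-(ε * ((4*α^2*Y^2 - 2*α) * Ez))) :=
      mul_le_mul_of_nonneg_left hyy2 hbb.le
    have t3 : deriv (gA γ) (q z) * (pdx q z)^2 ≤ Ca * (ε^2*(4*α^2)*X^2*Ez^2) := by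
      have hrw : (pdx q z)^2 = ε^2*(4*α^2)*X^2*Ez^2 := by rw [hqx]; ring
      rw [hrw]
      exact mul_le_mul (le_trans (le_abs_self _) hdaCa) le_rfl (by positivity) hCa0
    have t4 : deriv (gB γ) (q z) * (pdy q z)^2 ≤ Ca * (ε^2*(4*α^2)*Y^2*Ez^2) := by
      have hrw : (pdy q z)^2 = ε^2*(4*α^2)*Y^2*Ez^2 := by rw [hqy]; ring
      rw [hrw]
      exact mul_le_mul (le_trans (le_abs_self _) hdbCa) le_rfl (by positivity) hCa0
    have key1 : ε*Ez*(gA γ (q z)*(4*α^2*X^2-2*α) + gB γ (q z)*(4*α^2*Y^2-2*α))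
        ≤ ε^2*Ez^2*(4*α^2)*Ca*(X^2+Y^2) := by
      linarith only [t1, t2, t3, t4, hpde]
    have e1 : Ez^2 ≤ Ez := by nlinarith only [hEz1, hEzpos]
    have e2 : Ez^2*(X^2+Y^2) ≤ Ez*rr^2 := by
      nlinarith only [e1, hddz2, hEzpos, sq_nonneg X, sq_nonneg Y]
    have key2 : ε^2*Ez^2*(4*α^2)*Ca*(X^2+Y^2) ≤ ε*Ez*(ε*(4*α^2)*Ca*rr^2) := by
      have h := mul_le_mul_of_nonneg_left e2
        (mul_nonneg (by positivity : (0:ℝ) ≤ ε^2*(4*α^2)) hCa0)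
      linarith only [h]
    have key3 : gA γ (q z)*(4*α^2*X^2-2*α) + gB γ (q z)*(4*α^2*Y^2-2*α)
        ≤ ε*(4*α^2)*Ca*rr^2 := by
      have hpos : 0 < ε*Ez := mul_pos hε hEzpos
      exact (mul_le_mul_iff_right₀ hpos).1 (le_trans key1 key2)
    have k1 : 4*α^2*κ ≤ 4*α^2*(gA γ (q z)*X^2 + gB γ (q z)*Y^2) :=
      mul_le_mul_of_nonneg_left hKeyz (by positivity)
    have k2 : 2*α*(gA γ (q z)) ≤ 2*α*|Ma| :=
      mul_le_mul_of_nonneg_left (le_trans hMaz (le_abs_self Ma)) (by linarith only [hα])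
    have k3 : 2*α*(gB γ (q z)) ≤ 2*α*|Mb| :=
      mul_le_mul_of_nonneg_left (le_trans hMbz (le_abs_self Mb)) (by linarith only [hα])
    have k4 : 2*α*(α*κ) = 2*α*(|Ma|+|Mb|+1) := by rw [hακ]
    have key4 : 2*α^2*κ + 2*α
        ≤ gA γ (q z)*(4*α^2*X^2-2*α) + gB γ (q z)*(4*α^2*Y^2-2*α) := by
      linarith only [k1, k2, k3, k4]
    have h1 : ε*(2*(Ca+1)*rr^2) ≤ κ :=
      (le_div_iff₀ (by nlinarith only [hCa0, mul_pos hrr hrr])).1 hεb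
    have k5a : 2*α^2*(ε*(2*(Ca+1)*rr^2)) ≤ 2*α^2*κ :=
      mul_le_mul_of_nonneg_left h1 (by positivity)
    have k5b : (0:ℝ) ≤ ε*α^2*rr^2 := by positivity
    have k5 : ε*(4*α^2)*Ca*rr^2 ≤ 2*α^2*κ := by linarith only [k5a, k5b]
    linarith only [key3, key4, k5, hα]
  -- ===== conclusion: differentiate along μ =====
  have hm : 0 < μ.1*(w1/2) + μ.2*(w2/2) := by linarith only [hacute]
  obtain ⟨m, hm'⟩ : ∃ y : ℝ, y = μ.1*(w1/2) + μ.2*(w2/2) := ⟨_, rfl⟩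
  have hmpos : 0 < m := by rw [hm']; exact hm
  obtain ⟨t0, ht0'⟩ : ∃ y : ℝ, y = min 1 (min m (rr^2/(4*(2*m+1)))) := ⟨_, rfl⟩
  have ht0 : 0 < t0 := by
    rw [ht0']
    exact lt_min one_pos (lt_min hmpos
      (div_pos (by nlinarith only [mul_pos hrr hrr]) (by linarith only [hmpos])))
  have ht0a : t0 ≤ 1 := by rw [ht0']; exact min_le_left _ _
  have ht0b : t0 ≤ m := by rw [ht0']; exact le_trans (min_le_right _ _) (min_le_left _ _)
  have ht0c : t0 ≤ rr^2/(4*(2*m+1)) := by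
    rw [ht0']; exact le_trans (min_le_right _ _) (min_le_right _ _)
  have hpt : ∀ t : ℝ, -t0 < t → t ≤ 0 → ((P.1 + t*μ.1, P.2 + t*μ.2) : ℝ×ℝ) ∈ K := by
    intro t h1 h2
    have e1 : P.1 + t*μ.1 - a' = w1/2 + t*μ.1 := by rw [ha', hw1]; ring
    have e2 : P.2 + t*μ.2 - b' = w2/2 + t*μ.2 := by rw [hb', hw2]; ring
    have hrrP : (w1/2)^2 + (w2/2)^2 = rr^2 := by rw [hrrsq, ← hP]; ring
    have hddt : (P.1 + t*μ.1 - a')^2 + (P.2 + t*μ.2 - b')^2 = rr^2 + t*(2*m + t) := by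
      rw [e1, e2]
      linear_combination hrrP + t^2*hunit - 2*t*hm'
    have i1 : t*(2*m+t) ≥ t*(2*m+1) := by
      linarith only [mul_nonneg (neg_nonneg.2 h2) (show (0:ℝ) ≤ 1 - t by linarith only [h2])]
    have i2 : t*(2*m+1) ≥ -(t0*(2*m+1)) := by
      linarith only [mul_nonneg (show (0:ℝ) ≤ t + t0 by linarith only [h1])
        (show (0:ℝ) ≤ 2*m+1 by linarith only [hmpos])]
    have i3 : t0*(4*(2*m+1)) ≤ rr^2 :=
      (le_div_iff₀ (by linarith only [hmpos])).1 ht0c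
    have i4 : t*(2*m+t) ≤ 0 := by
      linarith only [mul_nonneg (neg_nonneg.2 h2)
        (show (0:ℝ) ≤ 2*m+t by linarith only [h1, ht0b, hmpos])]
    constructor
    · show rr^2/4 ≤ _
      rw [hddt]; linarith only [i1, i2, i3, sq_nonneg rr]
    · show _ ≤ rr^2
      rw [hddt]; linarith only [i4]
  obtain ⟨G, hG'⟩ : ∃ g : ℝ → ℝ, g = fun t : ℝ => cstar γ - q (P.1 + t*μ.1, P.2 + t*μ.2)
      - ε * W (P.1 + t*μ.1, P.2 + t*μ.2) := ⟨_, rfl⟩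
  have hP00 : ((P.1 + 0*μ.1, P.2 + 0*μ.2) : ℝ×ℝ) = P := by
    ext <;> simp
  have hddP2 : (P.1 + 0*μ.1 - a')^2 + (P.2 + 0*μ.2 - b')^2 = rr^2 := by
    rw [show P.1 + 0*μ.1 = P.1 by ring, show P.2 + 0*μ.2 = P.2 by ring]
    exact hddP
  have hG0 : G 0 = 0 := by
    rw [hG']
    simp only []
    rw [hP00, hson, hWout P hddP]
    ring
  have hGpos : ∀ t : ℝ, -t0 < t → t < 0 → 0 ≤ G t := by
    intro t h1 h2
    have h := hcore _ (hpt t h1 h2.le)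
    rw [hG']
    simp only []
    linarith only [h]
  have hqd : DifferentiableAt ℝ q P := q_diffAt hV hq hPV
  have hc1' : HasDerivAt (fun t : ℝ => P.1 + t*μ.1) μ.1 0 := by
    simpa using ((hasDerivAt_id (0:ℝ)).mul_const μ.1).const_add P.1
  have hc2' : HasDerivAt (fun t : ℝ => P.2 + t*μ.2) μ.2 0 := by
    simpa using ((hasDerivAt_id (0:ℝ)).mul_const μ.2).const_add P.2
  have hline : HasDerivAt (fun t : ℝ => ((P.1 + t*μ.1, P.2 + t*μ.2) : ℝ×ℝ))
      ((μ.1, μ.2) : ℝ×ℝ) 0 := hc1'.prodMk hc2'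
  have hdecomp : fderiv ℝ q P ((μ.1, μ.2) : ℝ×ℝ) = μ.1 * pdx q P + μ.2 * pdy q P := by
    have e : ((μ.1, μ.2) : ℝ×ℝ) = μ.1 • ((1:ℝ),(0:ℝ)) + μ.2 • ((0:ℝ),(1:ℝ)) := by
      simp [Prod.ext_iff]
    rw [e]
    simp only [ContinuousLinearMap.map_add, ContinuousLinearMap.map_smul, smul_eq_mul]
    rw [← pdx_eq_fderiv hqd, ← pdy_eq_fderiv hqd]
  have hql : HasDerivAt (fun t : ℝ => q (P.1 + t*μ.1, P.2 + t*μ.2))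
      (μ.1 * pdx q P + μ.2 * pdy q P) 0 := by
    have hqP' : HasFDerivAt q (fderiv ℝ q P) ((P.1 + 0*μ.1, P.2 + 0*μ.2) : ℝ×ℝ) := by
      rw [hP00]; exact hqd.hasFDerivAt
    have h1 := hqP'.comp_hasDerivAt 0 hline
    rw [hdecomp] at h1
    exact h1
  have hWin : HasDerivAt (fun t : ℝ => (P.1 + t*μ.1 - a')^2 + (P.2 + t*μ.2 - b')^2)
      (2*(P.1 - a')*μ.1 + 2*(P.2 - b')*μ.2) 0 := by
    have c1 : HasDerivAt (fun t : ℝ => P.1 + t*μ.1 - a') μ.1 0 := hc1'.sub_const a'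
    have c2 : HasDerivAt (fun t : ℝ => P.2 + t*μ.2 - b') μ.2 0 := hc2'.sub_const b'
    have h := (c1.pow 2).add (c2.pow 2)
    simpa [Pi.add_def, Pi.pow_def] using h
  have hWl : HasDerivAt (fun t : ℝ => W (P.1 + t*μ.1, P.2 + t*μ.2))
      (Real.exp (-α*rr^2) * (-α*(2*m))) 0 := by
    have h1 : HasDerivAt (fun t : ℝ => -α*((P.1 + t*μ.1 - a')^2 + (P.2 + t*μ.2 - b')^2))
        (-α*(2*(P.1 - a')*μ.1 + 2*(P.2 - b')*μ.2)) 0 := hWin.const_mul (-α)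
    have h2 := (h1.exp).sub_const (Real.exp (-α*rr^2))
    have h3 : Real.exp (-α*((P.1 + 0*μ.1 - a')^2 + (P.2 + 0*μ.2 - b')^2))
        = Real.exp (-α*rr^2) := by rw [hddP2]
    rw [hWdef]
    simp only []
    refine h2.congr_deriv ?_
    rw [h3, e1P, e2P, hm']
    ring
  have hGd : HasDerivAt G
      (-(μ.1 * pdx q P + μ.2 * pdy q P) - ε * (Real.exp (-α*rr^2) * (-α*(2*m)))) 0 := by
    rw [hG']
    exact ((hasDerivAt_const (0:ℝ) (cstar γ)).sub hql).sub (hWl.const_mul ε) |>.congr_deriv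
      (by ring)
  have hfin := right_endpoint_deriv_nonpos ht0 hGpos hG0 hGd
  have hexp := Real.exp_pos (-α*rr^2)
  nlinarith only [hfin, mul_pos (mul_pos (mul_pos hε hα) hmpos) hexp]
end
end

section
/- Let ψ₁ < ψ₂, μ > 0, h₀ ∈ C²([ψ₁,ψ₂]), and let q be of class C² on an open set containing K = {(φ,ψ) : h₀(ψ) − μ ≤ φ ≤ h₀(ψ) + μ, ψ₁ ≤ ψ ≤ ψ₂}, satisfying (⋆) there, with q(h₀(ψ),ψ) = c_* for all ψ ∈ [ψ₁,ψ₂] and q(φ,ψ) < c_* whenever h₀(ψ) − μ ≤ φ < h₀(ψ) (the flow is subsonic on the left of the sonic curve φ = h₀(ψ)). Then: (i) if ∂q/∂ψ(h₀(ψ₁),ψ₁) = 0 and h₀'(ψ₁) = 0, there exists ε ∈ (0, ψ₂ − ψ₁] such that h₀(ψ) ≤ h₀(ψ₁) for all ψ ∈ [ψ₁, ψ₁+ε]; (ii) if ∂q/∂ψ(h₀(ψ₂),ψ₂) = 0 and h₀'(ψ₂) = 0, there exists ε ∈ (0, ψ₂ − ψ₁] such that h₀(ψ) ≤ h₀(ψ₂)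 for all ψ ∈ [ψ₂−ε, ψ₂]. -/
open Real Set MeasureTheory Filter

noncomputable section

set_option linter.unusedSectionVars false
set_option maxHeartbeats 4000000

-- ==================== auxiliary definitions ====================

/-- the linear function inside the density -/
def auxU (γ t : ℝ) : ℝ := 1 - (γ - 1) / 2 * t

/-- the exponent -/
def eγ (γ : ℝ) : ℝ := (1 : ℝ) / (γ - 1)

lemma rhoF_eq (γ t : ℝ) : rhoF γ t = auxU γ t ^ eγ γ := rfl

/-- closed form of the `Afun` integrand -/
def FF (γ s : ℝ) : ℝ := (1 - (γ + 1) / 2 * s ^ 2) * (auxU γ (s ^ 2) ^ (eγ γ - 1) / (s * (rhoF γ (s ^ 2)) ^ 2))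

/-- the `Bfun` integrand -/
def bb (γ s : ℝ) : ℝ := rhoF γ (s ^ 2) / s

/-- good region -/
def Sgood (γ : ℝ) : Set ℝ := {s : ℝ | 0 < s ∧ 0 < auxU γ (s ^ 2)}

section OneD

variable {γ : ℝ} (hγ : 1 < γ)
include hγ

lemma hγ1 : 0 < γ - 1 := by linarith
lemma hγp : 0 < γ + 1 := by linarith

lemma auxU_cstar : auxU γ ((cstar γ) ^ 2) = 2 / (γ + 1) := by
  rw [cstar_sq hγ]
  unfold auxU
  have h1 : γ + 1 ≠ 0 := by positivity
  field_simp
  ring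

lemma auxU_cstar_pos : 0 < auxU γ ((cstar γ) ^ 2) := by
  rw [auxU_cstar hγ]; positivity

lemma isOpen_Sgood : IsOpen (Sgood γ) := by
  have h1 : Continuous (fun s : ℝ => auxU γ (s ^ 2)) := by
    unfold auxU; fun_prop
  exact (isOpen_lt continuous_const continuous_id).inter (isOpen_lt continuous_const h1)

lemma cstar_mem_Sgood : cstar γ ∈ Sgood γ := ⟨cstar_pos hγ, auxU_cstar_pos hγ⟩

lemma hasDerivAt_auxU (t : ℝ) : HasDerivAt (auxU γ) (-((γ - 1) / 2)) t := by
  have : HasDerivAt (fun t : ℝ => (γ - 1) / 2 * t) ((γ - 1) / 2) t := by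
    simpa using (hasDerivAt_id t).const_mul ((γ - 1) / 2)
  exact this.const_sub 1

lemma hasDerivAt_rhoF {t : ℝ} (ht : 0 < auxU γ t) :
    HasDerivAt (rhoF γ) (-(1 / 2) * auxU γ t ^ (eγ γ - 1)) t := by
  have h1 := (hasDerivAt_auxU hγ t).rpow_const (p := eγ γ) (Or.inl (ne_of_gt ht))
  have h2 : -((γ - 1) / 2) * eγ γ = -(1 / 2) := by
    unfold eγ
    have : γ - 1 ≠ 0 := ne_of_gt (hγ1 hγ)
    field_simp
  show HasDerivAt (fun t => auxU γ t ^ eγ γ) (-(1 / 2) * auxU γ t ^ (eγ γ - 1)) t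
  rw [← h2]
  exact h1

lemma deriv_rhoF {t : ℝ} (ht : 0 < auxU γ t) :
    deriv (rhoF γ) t = -(1 / 2) * auxU γ t ^ (eγ γ - 1) := (hasDerivAt_rhoF hγ ht).deriv

lemma rhoF_pos {t : ℝ} (ht : 0 < auxU γ t) : 0 < rhoF γ t :=
  Real.rpow_pos_of_pos ht _

/-- The literal integrand of `Afun` agrees with the closed form `FF` on the good region. -/
lemma integrand_eq_FF {s : ℝ} (hs : s ∈ Sgood γ) :
    (rhoF γ (s ^ 2) + 2 * s ^ 2 * deriv (rhoF γ) (s ^ 2)) / (s * (rhoF γ (s ^ 2)) ^ 2) = FF γ s := by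
  obtain ⟨hs0, hsu⟩ := hs
  rw [deriv_rhoF hγ hsu]
  have key : rhoF γ (s ^ 2) = auxU γ (s ^ 2) ^ (eγ γ - 1) * auxU γ (s ^ 2) := by
    rw [rhoF_eq]
    nth_rewrite 3 [← Real.rpow_one (auxU γ (s ^ 2))]
    rw [← Real.rpow_add hsu]
    norm_num
  have hU : auxU γ (s ^ 2) - s ^ 2 = 1 - (γ + 1) / 2 * s ^ 2 := by unfold auxU; ring
  unfold FF
  rw [key]
  rw [← hU]
  ring

end OneD

section Part2
variable {γ : ℝ} (hγ : 1 < γ)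
include hγ

lemma contDiffAt_rho_sq {s : ℝ} (hs : s ∈ Sgood γ) (p : ℝ) :
    ContDiffAt ℝ 1 (fun x : ℝ => auxU γ (x ^ 2) ^ p) s := by
  have h1 : ContDiffAt ℝ 1 (fun x : ℝ => auxU γ (x ^ 2)) s := by
    unfold auxU
    exact (contDiffAt_const.sub (contDiffAt_const.mul (contDiffAt_id.pow 2)))
  have h2 : ContDiffAt ℝ 1 (fun x : ℝ => x ^ p) (auxU γ (s ^ 2)) :=
    Real.contDiffAt_rpow_const_of_ne (ne_of_gt hs.2)
  exact h2.comp s h1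

lemma contDiffAt_FF {s : ℝ} (hs : s ∈ Sgood γ) : ContDiffAt ℝ 1 (FF γ) s := by
  have hnum : ContDiffAt ℝ 1 (fun x : ℝ => auxU γ (x ^ 2) ^ (eγ γ - 1)) s :=
    contDiffAt_rho_sq hγ hs _
  have hrho : ContDiffAt ℝ 1 (fun x : ℝ => rhoF γ (x ^ 2)) s := contDiffAt_rho_sq hγ hs _
  have hden : ContDiffAt ℝ 1 (fun x : ℝ => x * (rhoF γ (x ^ 2)) ^ 2) s :=
    contDiffAt_id.mul (hrho.pow 2)
  have hden0 : s * (rhoF γ (s ^ 2)) ^ 2 ≠ 0 := by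
    have h1 := rhoF_pos hγ hs.2
    have h2 := hs.1
    positivity
  have hN : ContDiffAt ℝ 1 (fun x : ℝ => 1 - (γ + 1) / 2 * x ^ 2) s :=
    contDiffAt_const.sub (contDiffAt_const.mul (contDiffAt_id.pow 2))
  exact hN.mul (hnum.div hden hden0)

lemma contDiffAt_bb {s : ℝ} (hs : s ∈ Sgood γ) : ContDiffAt ℝ 1 (bb γ) s :=
  (contDiffAt_rho_sq hγ hs (eγ γ)).div contDiffAt_id (ne_of_gt hs.1)

lemma contDiffOn_FF : ContDiffOn ℝ 1 (FF γ) (Sgood γ) :=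
  fun s hs => (contDiffAt_FF hγ hs).contDiffWithinAt

lemma hasDerivAt_FF {s : ℝ} (hs : s ∈ Sgood γ) :
    HasDerivAt (FF γ) (deriv (FF γ) s) s :=
  ((contDiffAt_FF hγ hs).differentiableAt one_ne_zero).hasDerivAt

lemma hasDerivAt_bb {s : ℝ} (hs : s ∈ Sgood γ) :
    HasDerivAt (bb γ) (deriv (bb γ) s) s :=
  ((contDiffAt_bb hγ hs).differentiableAt one_ne_zero).hasDerivAt

lemma continuousOn_derivFF : ContinuousOn (deriv (FF γ)) (Sgood γ) :=
  (contDiffOn_FF hγ).continuousOn_deriv_of_isOpen (isOpen_Sgood hγ) le_rfl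

lemma HH_pos {s : ℝ} (hs : s ∈ Sgood γ) :
    0 < auxU γ (s ^ 2) ^ (eγ γ - 1) / (s * (rhoF γ (s ^ 2)) ^ 2) := by
  have h1 := Real.rpow_pos_of_pos hs.2 (eγ γ - 1)
  have h2 := rhoF_pos hγ hs.2
  have h3 := hs.1
  positivity

lemma NN_cstar : 1 - (γ + 1) / 2 * (cstar γ) ^ 2 = 0 := by
  rw [cstar_sq hγ]
  have : γ + 1 ≠ 0 := by positivity
  field_simp
  ring

lemma derivFF_cstar_neg : deriv (FF γ) (cstar γ) < 0 := by
  set c := cstar γ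
  have hc : c ∈ Sgood γ := cstar_mem_Sgood hγ
  have hH : HasDerivAt (fun x : ℝ => auxU γ (x ^ 2) ^ (eγ γ - 1) / (x * (rhoF γ (x ^ 2)) ^ 2))
      (deriv (fun x : ℝ => auxU γ (x ^ 2) ^ (eγ γ - 1) / (x * (rhoF γ (x ^ 2)) ^ 2)) c) c := by
    have hnum : ContDiffAt ℝ 1 (fun x : ℝ => auxU γ (x ^ 2) ^ (eγ γ - 1)) c :=
      contDiffAt_rho_sq hγ hc _
    have hrho : ContDiffAt ℝ 1 (fun x : ℝ => rhoF γ (x ^ 2)) c := contDiffAt_rho_sq hγ hc _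
    have hden0 : c * (rhoF γ (c ^ 2)) ^ 2 ≠ 0 := by
      have := rhoF_pos hγ hc.2
      have := hc.1
      positivity
    exact (((hnum.div (contDiffAt_id.mul (hrho.pow 2)) hden0)).differentiableAt one_ne_zero).hasDerivAt
  have hN : HasDerivAt (fun x : ℝ => 1 - (γ + 1) / 2 * x ^ 2) (-(γ + 1) * c) c := by
    have h1 : HasDerivAt (fun x : ℝ => x ^ 2) (2 * c) c := by
      simpa using (hasDerivAt_pow 2 c)
    have h2 := (h1.const_mul ((γ + 1) / 2)).const_sub 1
    rw [show -(γ + 1) * c = -((γ + 1) / 2 * (2 * c)) by ring]; exact h2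
  have hFF := hN.mul hH
  have hd : deriv (FF γ) c = -(γ + 1) * c *
      (auxU γ (c ^ 2) ^ (eγ γ - 1) / (c * (rhoF γ (c ^ 2)) ^ 2)) := by
    have := hFF.deriv
    rw [show ((fun x : ℝ => (1 - (γ + 1) / 2 * x ^ 2)) *
        fun x : ℝ => (auxU γ (x ^ 2) ^ (eγ γ - 1) / (x * (rhoF γ (x ^ 2)) ^ 2))) = FF γ from rfl] at this
    rw [this, NN_cstar hγ]
    ring
  rw [hd]
  have h1 := HH_pos hγ hc
  have h2 := cstar_pos hγ
  have h3 := hγp hγ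
  nlinarith [mul_pos (mul_pos h3 h2) h1]

lemma FF_bound {s δ M : ℝ} (hδ : 0 < δ) (hδc : δ ≤ cstar γ)
    (hs : s ∈ Icc (cstar γ - δ) (cstar γ + δ))
    (hM : |auxU γ (s ^ 2) ^ (eγ γ - 1) / (s * (rhoF γ (s ^ 2)) ^ 2)| ≤ M) :
    |FF γ s| ≤ ((γ + 1) / 2 * (2 * cstar γ + δ) * M) * |s - cstar γ| := by
  set c := cstar γ with hcdef
  obtain ⟨hs1, hs2⟩ := hs
  have hc := cstar_pos hγ
  have hγp' := hγp hγ
  have hM0 : 0 ≤ M := le_trans (abs_nonneg _) hM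
  have hNs : 1 - (γ + 1) / 2 * s ^ 2 = (γ + 1) / 2 * ((c + s) * (c - s)) := by
    have h := NN_cstar hγ
    nlinarith [h]
  have h1 : |FF γ s| = |1 - (γ + 1) / 2 * s ^ 2| *
      |auxU γ (s ^ 2) ^ (eγ γ - 1) / (s * (rhoF γ (s ^ 2)) ^ 2)| := abs_mul _ _
  have hNabs : |1 - (γ + 1) / 2 * s ^ 2| ≤ (γ + 1) / 2 * (2 * c + δ) * |s - c| := by
    rw [hNs, abs_mul, abs_mul]
    have e1 : |(γ + 1) / 2| = (γ + 1) / 2 := abs_of_pos (by positivity)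
    have e2 : |c + s| ≤ 2 * c + δ := by
      rw [abs_le]; constructor <;> nlinarith
    have e3 : |c - s| = |s - c| := abs_sub_comm _ _
    rw [e1, e3]
    have h5 := abs_nonneg (s - c)
    nlinarith [mul_le_mul_of_nonneg_right e2 h5]
  rw [h1]
  calc |1 - (γ + 1) / 2 * s ^ 2| * |auxU γ (s ^ 2) ^ (eγ γ - 1) / (s * (rhoF γ (s ^ 2)) ^ 2)|
      ≤ ((γ + 1) / 2 * (2 * c + δ) * |s - c|) * M := by
        apply mul_le_mul hNabs hM (abs_nonneg _)
        have h5 := abs_nonneg (s - c)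
        have h6 : (0:ℝ) ≤ (γ + 1) / 2 * (2 * c + δ) := by nlinarith
        exact mul_nonneg h6 h5
    _ = ((γ + 1) / 2 * (2 * c + δ) * M) * |s - c| := by ring

end Part2

section Part3
variable {γ : ℝ} (hγ : 1 < γ)
include hγ

lemma contAt_HH {s : ℝ} (hs : s ∈ Sgood γ) :
    ContinuousAt (fun x : ℝ => auxU γ (x ^ 2) ^ (eγ γ - 1) / (x * (rhoF γ (x ^ 2)) ^ 2)) s := by
  have hnum := (contDiffAt_rho_sq hγ hs (eγ γ - 1)).continuousAt
  have hrho := (contDiffAt_rho_sq hγ hs (eγ γ)).continuousAt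
  have hden0 : s * (rhoF γ (s ^ 2)) ^ 2 ≠ 0 := by
    have h1 := rhoF_pos hγ hs.2
    have h2 := hs.1
    positivity
  exact hnum.div (continuousAt_id.mul (hrho.pow 2)) hden0

lemma Bfun_cstar : Bfun γ (cstar γ) = 0 := intervalIntegral.integral_same

/-- The analytic package: all local facts about `Afun`, `Bfun`, `FF`, `bb` near the sonic speed. -/
lemma package : ∃ δ κ CF : ℝ, 0 < δ ∧ 0 < κ ∧ 0 ≤ CF ∧
    ∀ s ∈ Icc (cstar γ - δ) (cstar γ + δ),
      HasDerivAt (Afun γ) (FF γ s) s ∧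
      HasDerivAt (FF γ) (deriv (FF γ) s) s ∧ deriv (FF γ) s ≤ 0 ∧
      |FF γ s| ≤ CF * |s - cstar γ| ∧
      HasDerivAt (Bfun γ) (bb γ s) s ∧ κ ≤ bb γ s ∧ HasDerivAt (bb γ) (deriv (bb γ) s) s ∧
      (s ≤ cstar γ → Bfun γ s ≤ -(κ * (cstar γ - s))) := by
  classical
  set c := cstar γ with hc_def
  have hc := cstar_pos hγ
  have hcS := cstar_mem_Sgood hγ
  -- a base radius inside the good region
  obtain ⟨ε, hε0, hball⟩ := Metric.isOpen_iff.mp (isOpen_Sgood hγ) _ hcS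
  set δS : ℝ := min (ε / 3) (c / 2) with hδS_def
  have hδS0 : 0 < δS := lt_min (by positivity) (by positivity)
  have hδSc : δS ≤ c / 2 := min_le_right _ _
  have hsub : Icc (c - 2 * δS) (c + 2 * δS) ⊆ Sgood γ := by
    intro s hs
    apply hball
    rw [Metric.mem_ball, Real.dist_eq, abs_lt]
    have h1 : δS ≤ ε / 3 := min_le_left _ _
    obtain ⟨h2, h3⟩ := hs
    constructor <;> nlinarith
  have hsub' : Icc (c - δS) (c + δS) ⊆ Sgood γ := by
    intro s hs; exact hsub ⟨by linarith [hs.1, hδS0], by linarith [hs.2, hδS0]⟩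
  -- FTC for Afun
  have hIoo_open : IsOpen (Ioo (c - 2 * δS) (c + 2 * δS)) := isOpen_Ioo
  have hFFcontIoo : ContinuousOn (FF γ) (Ioo (c - 2 * δS) (c + 2 * δS)) := fun s hs =>
    ((contDiffAt_FF hγ (hsub (Ioo_subset_Icc_self hs))).continuousAt).continuousWithinAt
  have hcmem : c ∈ Icc (c - 2 * δS) (c + 2 * δS) := by
    constructor <;> nlinarith
  have hAd : ∀ b ∈ Ioo (c - 2 * δS) (c + 2 * δS), HasDerivAt (Afun γ) (FF γ b) b := by
    intro b hb
    have hbmem : b ∈ Icc (c - 2 * δS) (c + 2 * δS) := Ioo_subset_Icc_self hb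
    have huIcc : uIcc c b ⊆ Icc (c - 2 * δS) (c + 2 * δS) := uIcc_subset_Icc hcmem hbmem
    have hint : IntervalIntegrable (FF γ) MeasureTheory.volume c b :=
      (ContinuousOn.mono (fun s hs => ((contDiffAt_FF hγ (hsub hs)).continuousAt).continuousWithinAt) huIcc).intervalIntegrable
    have hmeas := hFFcontIoo.stronglyMeasurableAtFilter (μ := MeasureTheory.volume) hIoo_open b hb
    have hca : ContinuousAt (FF γ) b := (contDiffAt_FF hγ (hsub hbmem)).continuousAt
    have hAA := intervalIntegral.integral_hasDerivAt_right hint hmeas hca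
    apply hAA.congr_of_eventuallyEq
    filter_upwards [hIoo_open.mem_nhds hb] with x hx
    have hxmem : x ∈ Icc (c - 2 * δS) (c + 2 * δS) := Ioo_subset_Icc_self hx
    unfold Afun
    apply intervalIntegral.integral_congr
    intro t ht
    exact integrand_eq_FF hγ (hsub (uIcc_subset_Icc hcmem hxmem ht))
  -- FTC for Bfun
  have hbbcontIoo : ContinuousOn (bb γ) (Ioo (c - 2 * δS) (c + 2 * δS)) := fun s hs =>
    ((contDiffAt_bb hγ (hsub (Ioo_subset_Icc_self hs))).continuousAt).continuousWithinAt
  have hBd : ∀ b ∈ Ioo (c - 2 * δS) (c + 2 * δS), HasDerivAt (Bfun γ) (bb γ b) b := by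
    intro b hb
    have hbmem : b ∈ Icc (c - 2 * δS) (c + 2 * δS) := Ioo_subset_Icc_self hb
    have huIcc : uIcc c b ⊆ Icc (c - 2 * δS) (c + 2 * δS) := uIcc_subset_Icc hcmem hbmem
    have hint : IntervalIntegrable (bb γ) MeasureTheory.volume c b :=
      (ContinuousOn.mono (fun s hs => ((contDiffAt_bb hγ (hsub hs)).continuousAt).continuousWithinAt) huIcc).intervalIntegrable
    have hmeas := hbbcontIoo.stronglyMeasurableAtFilter (μ := MeasureTheory.volume) hIoo_open b hb
    have hca : ContinuousAt (bb γ) b := (contDiffAt_bb hγ (hsub hbmem)).continuousAt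
    exact intervalIntegral.integral_hasDerivAt_right hint hmeas hca
  -- positivity of bb near c
  have hbbc : 0 < bb γ c := div_pos (rhoF_pos hγ hcS.2) hc
  set κ : ℝ := bb γ c / 2 with hκ_def
  have hκ0 : 0 < κ := by positivity
  have hev1 : ∀ᶠ s in nhds c, κ ≤ bb γ s :=
    ((contDiffAt_bb hγ hcS).continuousAt).eventually (eventually_ge_nhds (half_lt_self hbbc))
  have hev2 : ∀ᶠ s in nhds c, deriv (FF γ) s < 0 :=
    ((continuousOn_derivFF hγ).continuousAt ((isOpen_Sgood hγ).mem_nhds hcS)).eventually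
      (eventually_lt_nhds (derivFF_cstar_neg hγ))
  obtain ⟨ε', hε'0, hev'⟩ := Metric.eventually_nhds_iff.mp (hev1.and hev2)
  set δ : ℝ := min (ε' / 2) δS with hδ_def
  have hδ0 : 0 < δ := lt_min (by positivity) hδS0
  have hδδS : δ ≤ δS := min_le_right _ _
  have hδε' : δ ≤ ε' / 2 := min_le_left _ _
  -- bound for the HH factor
  have hHHcont : ContinuousOn (fun x : ℝ => auxU γ (x ^ 2) ^ (eγ γ - 1) / (x * (rhoF γ (x ^ 2)) ^ 2))
      (Icc (c - δS) (c + δS)) := fun s hs => (contAt_HH hγ (hsub' hs)).continuousWithinAt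
  obtain ⟨M, hM⟩ := isCompact_Icc.exists_bound_of_continuousOn hHHcont
  have hcmem' : c ∈ Icc (c - δS) (c + δS) := by constructor <;> nlinarith
  have hM0 : 0 ≤ M := le_trans (norm_nonneg _) (hM c hcmem')
  refine ⟨δ, κ, (γ + 1) / 2 * (2 * c + δS) * M, hδ0, hκ0, ?_, ?_⟩
  · have h1 : (0:ℝ) ≤ (γ + 1) / 2 := by linarith
    have h2 : (0:ℝ) ≤ 2 * c + δS := by linarith
    exact mul_nonneg (mul_nonneg h1 h2) hM0
  intro s hs
  obtain ⟨hs1, hs2⟩ := hs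
  have hsIoo : s ∈ Ioo (c - 2 * δS) (c + 2 * δS) := by constructor <;> nlinarith
  have hsIccS : s ∈ Icc (c - δS) (c + δS) := by constructor <;> nlinarith
  have hsball : dist s c < ε' := by
    rw [Real.dist_eq, abs_lt]; constructor <;> nlinarith
  have hδSc' : δS ≤ c := by linarith
  refine ⟨hAd s hsIoo, hasDerivAt_FF hγ (hsub' hsIccS), (hev' hsball).2.le, ?_, hBd s hsIoo,
    (hev' hsball).1, hasDerivAt_bb hγ (hsub' hsIccS), ?_⟩
  · have := FF_bound hγ hδS0 hδSc' hsIccS (M := M) (by rw [← Real.norm_eq_abs]; exact hM s hsIccS)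
    exact this
  · intro hsc
    have hsymm : Bfun γ s = - ∫ t in s..c, bb γ t := by
      rw [← intervalIntegral.integral_symm]; rfl
    have hintbb : IntervalIntegrable (bb γ) MeasureTheory.volume s c := by
      apply ContinuousOn.intervalIntegrable
      intro t ht
      have htmem : t ∈ Icc (c - δS) (c + δS) := by
        have := uIcc_subset_Icc (a₁ := s) (b₁ := c) ⟨hs1, hs2⟩ (by constructor <;> nlinarith) ht
        obtain ⟨h1, h2⟩ := this
        constructor <;> nlinarith
      exact ((contDiffAt_bb hγ (hsub' htmem)).continuousAt).continuousWithinAt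
    have hconst : ∫ t in s..c, (fun _ : ℝ => κ) t = (c - s) * κ := by
      rw [intervalIntegral.integral_const, smul_eq_mul]
    have hmono : ∫ t in s..c, (fun _ : ℝ => κ) t ≤ ∫ t in s..c, bb γ t := by
      apply intervalIntegral.integral_mono_on hsc intervalIntegrable_const hintbb
      intro t ht
      obtain ⟨ht1, ht2⟩ := ht
      have : dist t c < ε' := by
        rw [Real.dist_eq, abs_lt]
        constructor <;> linarith
      exact (hev' this).1
    rw [hsymm]
    rw [hconst] at hmono
    linarith

end Part3

-- ==================== 2-D calculus plumbing ====================

/-- first partial w.r.t. the first variable, as value of the Fréchet derivative -/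
def pd1 (q : ℝ × ℝ → ℝ) (z : ℝ × ℝ) : ℝ := fderiv ℝ q z (1, 0)

/-- first partial w.r.t. the second variable -/
def pd2 (q : ℝ × ℝ → ℝ) (z : ℝ × ℝ) : ℝ := fderiv ℝ q z (0, 1)

/-- second partial xx -/
def pd11 (q : ℝ × ℝ → ℝ) (z : ℝ × ℝ) : ℝ := fderiv ℝ (pd1 q) z (1, 0)

/-- second partial yy -/
def pd22 (q : ℝ × ℝ → ℝ) (z : ℝ × ℝ) : ℝ := fderiv ℝ (pd2 q) z (0, 1)

section TwoD

variable {q : ℝ × ℝ → ℝ} {V : Set (ℝ × ℝ)} (hV : IsOpen V) (hq : ContDiffOn ℝ 2 q V)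
include hV hq

lemma hasFDerivAt_of_mem {z : ℝ × ℝ} (hz : z ∈ V) : HasFDerivAt q (fderiv ℝ q z) z :=
  ((hq.differentiableOn (by norm_num)).differentiableAt (hV.mem_nhds hz)).hasFDerivAt

lemma hasDerivAt_horiz {x y : ℝ} (hz : (x, y) ∈ V) :
    HasDerivAt (fun x' => q (x', y)) (pd1 q (x, y)) x := by
  have h1 : HasDerivAt (fun x' : ℝ => (x', y)) (((1 : ℝ), (0 : ℝ))) x :=
    (hasDerivAt_id x).prodMk (hasDerivAt_const x y)
  have h2 := (hasFDerivAt_of_mem hV hq hz).comp_hasDerivAt x h1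
  simpa [Function.comp_def, pd1] using h2

lemma hasDerivAt_vert {x y : ℝ} (hz : (x, y) ∈ V) :
    HasDerivAt (fun y' => q (x, y')) (pd2 q (x, y)) y := by
  have h1 : HasDerivAt (fun y' : ℝ => (x, y')) (((0 : ℝ), (1 : ℝ))) y :=
    (hasDerivAt_const y x).prodMk (hasDerivAt_id y)
  have h2 := (hasFDerivAt_of_mem hV hq hz).comp_hasDerivAt y h1
  simpa [Function.comp_def, pd2] using h2

lemma contDiffOn_fderiv : ContDiffOn ℝ 1 (fderiv ℝ q) V :=
  hq.fderiv_of_isOpen hV (by norm_num)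

lemma contDiffOn_pd1 : ContDiffOn ℝ 1 (pd1 q) V := by
  have h := ((ContinuousLinearMap.apply ℝ ℝ (((1 : ℝ), (0 : ℝ)))).contDiff (n := 1)).comp_contDiffOn
    (contDiffOn_fderiv hV hq)
  exact h

lemma contDiffOn_pd2 : ContDiffOn ℝ 1 (pd2 q) V := by
  have h := ((ContinuousLinearMap.apply ℝ ℝ (((0 : ℝ), (1 : ℝ)))).contDiff (n := 1)).comp_contDiffOn
    (contDiffOn_fderiv hV hq)
  exact h

lemma hasDerivAt_pd1_horiz {x y : ℝ} (hz : (x, y) ∈ V) :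
    HasDerivAt (fun x' => pd1 q (x', y)) (pd11 q (x, y)) x := by
  have hdiff : HasFDerivAt (pd1 q) (fderiv ℝ (pd1 q) (x, y)) (x, y) :=
    (((contDiffOn_pd1 hV hq).differentiableOn one_ne_zero).differentiableAt
      (hV.mem_nhds hz)).hasFDerivAt
  have h1 : HasDerivAt (fun x' : ℝ => (x', y)) (((1 : ℝ), (0 : ℝ))) x :=
    (hasDerivAt_id x).prodMk (hasDerivAt_const x y)
  have h2 := hdiff.comp_hasDerivAt x h1
  simpa [Function.comp_def, pd11] using h2

lemma hasDerivAt_pd2_vert {x y : ℝ} (hz : (x, y) ∈ V) :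
    HasDerivAt (fun y' => pd2 q (x, y')) (pd22 q (x, y)) y := by
  have hdiff : HasFDerivAt (pd2 q) (fderiv ℝ (pd2 q) (x, y)) (x, y) :=
    (((contDiffOn_pd2 hV hq).differentiableOn one_ne_zero).differentiableAt
      (hV.mem_nhds hz)).hasFDerivAt
  have h1 : HasDerivAt (fun y' : ℝ => (x, y')) (((0 : ℝ), (1 : ℝ))) y :=
    (hasDerivAt_const y x).prodMk (hasDerivAt_id y)
  have h2 := hdiff.comp_hasDerivAt y h1
  simpa [Function.comp_def, pd22] using h2

lemma continuousOn_pd11 : ContinuousOn (pd11 q) V := by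
  have h0 : ContDiffOn ℝ 0 (fderiv ℝ (pd1 q)) V :=
    (contDiffOn_pd1 hV hq).fderiv_of_isOpen hV (by norm_num)
  have h := ((ContinuousLinearMap.apply ℝ ℝ (((1 : ℝ), (0 : ℝ)))).contDiff (n := 0)).comp_contDiffOn h0
  exact h.continuousOn

lemma hasDerivAt_curve {h0 : ℝ → ℝ} {d t : ℝ} (hd : HasDerivAt h0 d t) (hz : (h0 t, t) ∈ V) :
    HasDerivAt (fun s => q (h0 s, s)) (d * pd1 q (h0 t, t) + pd2 q (h0 t, t)) t := by
  have h1 : HasDerivAt (fun s => (h0 s, s)) ((d, (1 : ℝ))) t := hd.prodMk (hasDerivAt_id t)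
  have hF : HasFDerivAt q (fderiv ℝ q (h0 t, t)) ((fun s => (h0 s, s)) t) :=
    hasFDerivAt_of_mem hV hq hz
  have h2 := HasFDerivAt.comp_hasDerivAt (f := fun s => (h0 s, s)) t hF h1
  have h3 : (fderiv ℝ q (h0 t, t)) (d, 1) = d * pd1 q (h0 t, t) + pd2 q (h0 t, t) := by
    have he : ((d : ℝ), (1 : ℝ)) = d • ((1 : ℝ), (0 : ℝ)) + ((0 : ℝ), (1 : ℝ)) := by
      simp [Prod.ext_iff]
    rw [he, map_add, ContinuousLinearMap.map_smul]
    simp [pd1, pd2, smul_eq_mul]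
  rw [← h3]
  simpa [Function.comp_def] using h2

end TwoD

-- ==================== Grönwall-type lemma ====================

/-- If `φ ≥ 0`, `φ a = 0`, `φ' a = 0` and `φ'' ≤ C φ` on a short interval, then `φ ≡ 0`. -/
lemma gronwall_zero {φ φ' φ'' : ℝ → ℝ} {a b C : ℝ} (hab : a ≤ b) (hC : 0 ≤ C)
    (hlen : C * (b - a) ^ 2 < 1)
    (hd1 : ∀ t ∈ Icc a b, HasDerivAt φ (φ' t) t)
    (hd2 : ∀ t ∈ Icc a b, HasDerivAt φ' (φ'' t) t)
    (ha0 : φ a = 0) (ha1 : φ' a = 0)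
    (hpos : ∀ t ∈ Icc a b, 0 ≤ φ t)
    (hineq : ∀ t ∈ Icc a b, φ'' t ≤ C * φ t) :
    ∀ t ∈ Icc a b, φ t = 0 := by
  have hcontφ : ContinuousOn φ (Icc a b) := fun t ht => (hd1 t ht).continuousAt.continuousWithinAt
  have hcontφ' : ContinuousOn φ' (Icc a b) := fun t ht => (hd2 t ht).continuousAt.continuousWithinAt
  obtain ⟨tm, htm_mem, htm_max⟩ := isCompact_Icc.exists_isMaxOn (nonempty_Icc.2 hab) hcontφ
  set M := φ tm with hM_def
  have hM0 : 0 ≤ M := hpos tm htm_mem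
  have hMbd : ∀ t ∈ Icc a b, φ t ≤ M := fun t ht => htm_max ht
  -- step 1 : bound the first derivative
  have hstep1 : ∀ t ∈ Icc a b, φ' t ≤ C * M * (t - a) := by
    intro t ht
    rcases eq_or_lt_of_le ht.1 with h | h
    · rw [← h, ha1]; simp
    · obtain ⟨ξ, hξ, hslope⟩ := exists_hasDerivAt_eq_slope φ' φ'' h
        (hcontφ'.mono (Icc_subset_Icc le_rfl ht.2))
        (fun x hx => hd2 x ⟨hx.1.le, hx.2.le.trans ht.2⟩)
      have hξmem : ξ ∈ Icc a b := ⟨hξ.1.le, hξ.2.le.trans ht.2⟩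
      have h1 : φ'' ξ ≤ C * M := by
        calc φ'' ξ ≤ C * φ ξ := hineq ξ hξmem
          _ ≤ C * M := by
              apply mul_le_mul_of_nonneg_left (hMbd ξ hξmem) hC
      have h2 : φ' t = φ'' ξ * (t - a) := by
        have hta : t - a ≠ 0 := ne_of_gt (by linarith)
        rw [hslope, ha1, sub_zero, div_mul_cancel₀ _ hta]
      rw [h2]
      exact mul_le_mul_of_nonneg_right h1 (by linarith)
  -- step 2 : bound φ itself
  have hstep2 : ∀ t ∈ Icc a b, φ t ≤ C * M * (b - a) ^ 2 := by
    intro t ht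
    rcases eq_or_lt_of_le ht.1 with h | h
    · rw [← h, ha0]; positivity
    · obtain ⟨ξ, hξ, hslope⟩ := exists_hasDerivAt_eq_slope φ φ' h
        (hcontφ.mono (Icc_subset_Icc le_rfl ht.2))
        (fun x hx => hd1 x ⟨hx.1.le, hx.2.le.trans ht.2⟩)
      have hξmem : ξ ∈ Icc a b := ⟨hξ.1.le, hξ.2.le.trans ht.2⟩
      have h1 : φ' ξ ≤ C * M * (ξ - a) := hstep1 ξ hξmem
      have h2 : φ t = φ' ξ * (t - a) := by
        have hta : t - a ≠ 0 := ne_of_gt (by linarith)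
        rw [hslope, ha0, sub_zero, div_mul_cancel₀ _ hta]
      rw [h2]
      have h3 : 0 ≤ C * M := mul_nonneg hC hM0
      have h4 : ξ - a ≤ b - a := by have := hξ.2; have := ht.2; linarith
      have h5 : t - a ≤ b - a := by have := ht.2; linarith
      have h6 : 0 ≤ ξ - a := by have := hξ.1; linarith
      have h7 : 0 ≤ t - a := by linarith
      calc φ' ξ * (t - a) ≤ (C * M * (ξ - a)) * (t - a) :=
            mul_le_mul_of_nonneg_right h1 h7
        _ ≤ (C * M * (b - a)) * (b - a) :=
            mul_le_mul (mul_le_mul_of_nonneg_left h4 h3) h5 h7 (mul_nonneg h3 (by linarith))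
        _ = C * M * (b - a) ^ 2 := by ring
  -- conclude M = 0
  have hM_small : M ≤ C * M * (b - a) ^ 2 := by
    have := hstep2 tm htm_mem
    linarith
  have hMzero : M = 0 := by nlinarith
  intro t ht
  exact le_antisymm (by rw [← hMzero]; exact hMbd t ht) (hpos t ht)

-- ==================== the core lemma ====================

lemma core (γ : ℝ) (hγ : 1 < γ)
    (ψ1 ψ2 μ : ℝ) (hψ : ψ1 < ψ2) (hμ : 0 < μ)
    (h0 : ℝ → ℝ) (hh0 : ContDiff ℝ 2 h0)
    (V : Set (ℝ × ℝ)) (hV : IsOpen V)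
    (hKV : {p : ℝ × ℝ | h0 p.2 - μ ≤ p.1 ∧ p.1 ≤ h0 p.2 + μ ∧ ψ1 ≤ p.2 ∧ p.2 ≤ ψ2} ⊆ V)
    (q : ℝ × ℝ → ℝ) (hq : ContDiffOn ℝ 2 q V)
    (hPDE : ∀ p ∈ {p : ℝ × ℝ | h0 p.2 - μ ≤ p.1 ∧ p.1 ≤ h0 p.2 + μ ∧ ψ1 ≤ p.2 ∧ p.2 ≤ ψ2},
      chap γ q p)
    (hson : ∀ ψ ∈ Icc ψ1 ψ2, q (h0 ψ, ψ) = cstar γ)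
    (hsubl : ∀ ψ ∈ Icc ψ1 ψ2, ∀ φ, h0 ψ - μ ≤ φ → φ < h0 ψ → q (φ, ψ) < cstar γ)
    (hexc : pdy q (h0 ψ1, ψ1) = 0) :
    ∃ ε > 0, ε ≤ ψ2 - ψ1 ∧ ∀ ψ ∈ Icc ψ1 (ψ1 + ε), h0 ψ ≤ h0 ψ1 := by
  classical
  set c := cstar γ with hc_def
  have hψ1Icc : ψ1 ∈ Icc ψ1 ψ2 := ⟨le_rfl, hψ.le⟩
  set P : ℝ × ℝ := (h0 ψ1, ψ1) with hP_def
  have hPK : P ∈ {p : ℝ × ℝ | h0 p.2 - μ ≤ p.1 ∧ p.1 ≤ h0 p.2 + μ ∧ ψ1 ≤ p.2 ∧ p.2 ≤ ψ2} := by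
    refine ⟨by simp [hP_def]; linarith, by simp [hP_def]; linarith, by simp [hP_def], by simp [hψ.le, hP_def]⟩
  have hPV : P ∈ V := hKV hPK
  obtain ⟨δ, κ, CF, hδ0, hκ0, hCF0, hpack⟩ := package hγ
  -- a radius around P where q-values are within δ of c, inside V
  have hqP : q P = c := hson ψ1 hψ1Icc
  have hIccnhds : Icc (c - δ) (c + δ) ∈ nhds c := Icc_mem_nhds (by linarith) (by linarith)
  have hev : ∀ᶠ z in nhds P, q z ∈ Icc (c - δ) (c + δ) ∧ z ∈ V := by
    have h1 : ∀ᶠ z in nhds P, q z ∈ Icc (c - δ) (c + δ) := by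
      have hqc : ContinuousAt q P := (hq.continuousOn).continuousAt (hV.mem_nhds hPV)
      have := hqc.preimage_mem_nhds (by rw [hqP] at *; exact hIccnhds)
      exact this
    exact h1.and (hV.mem_nhds hPV)
  obtain ⟨r0, hr00, hball0⟩ := Metric.eventually_nhds_iff.mp hev
  set r : ℝ := r0 / 4 with hr_def
  have hr0 : 0 < r := by positivity
  have hq_range : ∀ z ∈ Metric.closedBall P (2 * r), q z ∈ Icc (c - δ) (c + δ) := by
    intro z hz
    have : dist z P < r0 := lt_of_le_of_lt (Metric.mem_closedBall.mp hz) (by rw [hr_def]; linarith)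
    exact (hball0 this).1
  have hcb_sub : Metric.closedBall P (2 * r) ⊆ V := by
    intro z hz
    have : dist z P < r0 := lt_of_le_of_lt (Metric.mem_closedBall.mp hz) (by rw [hr_def]; linarith)
    exact (hball0 this).2
  -- bound on the second x-derivative of q near P
  obtain ⟨D, hD⟩ := (isCompact_closedBall P (2 * r)).exists_bound_of_continuousOn
    ((continuousOn_pd11 hV hq).mono hcb_sub)
  have hD0 : 0 ≤ D := by
    refine le_trans (norm_nonneg _) (hD P ?_)
    simp [Metric.mem_closedBall]
    positivity
  set C := CF * D / κ with hC_def
  have hC0 : 0 ≤ C := by positivity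
  -- continuity of h0 at ψ1
  have hev2 : ∀ᶠ t in nhds ψ1, |h0 t - h0 ψ1| < min (μ / 2) (r / 2) := by
    have hm0 : 0 < min (μ / 2) (r / 2) := lt_min (by positivity) (by positivity)
    have hh0c : ContinuousAt h0 ψ1 := hh0.continuous.continuousAt
    have := hh0c.preimage_mem_nhds (Metric.ball_mem_nhds (h0 ψ1) hm0)
    filter_upwards [this] with t ht
    simpa [Real.dist_eq] using ht
  obtain ⟨rh, hrh0, hrh⟩ := Metric.eventually_nhds_iff.mp hev2
  -- choice of ε
  set ε := min (min (ψ2 - ψ1) (rh / 2)) (min (r / 2) (1 / (C + 1))) with hε_def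
  have hε0 : 0 < ε := by
    apply lt_min (lt_min (by linarith) (by positivity)) (lt_min (by positivity) (by positivity))
  have hεψ : ε ≤ ψ2 - ψ1 := le_trans (min_le_left _ _) (min_le_left _ _)
  have hεrh : ε ≤ rh / 2 := le_trans (min_le_left _ _) (min_le_right _ _)
  have hεr : ε ≤ r / 2 := le_trans (min_le_right _ _) (min_le_left _ _)
  have hεC' : ε ≤ 1 / (C + 1) := le_trans (min_le_right _ _) (min_le_right _ _)
  have hεC : C * ε ^ 2 < 1 := by
    have h1 : C * ε ^ 2 ≤ C * (1 / (C + 1)) ^ 2 := by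
      apply mul_le_mul_of_nonneg_left _ hC0
      have := hε0
      nlinarith
    have h2 : C * (1 / (C + 1)) ^ 2 < 1 := by
      rw [div_pow, one_pow, mul_one_div, div_lt_one (by positivity : (0:ℝ) < (C + 1) ^ 2)]
      nlinarith
    linarith
  -- main claim
  refine ⟨ε, hε0, hεψ, ?_⟩
  by_contra hcon
  push_neg at hcon
  obtain ⟨β, hβmem, hβ⟩ := hcon
  have hβ1 : ψ1 ≤ β := hβmem.1
  have hβ2 : β ≤ ψ1 + ε := hβmem.2
  have hβψ2 : β ≤ ψ2 := by linarith
  -- minimum of h0 on [ψ1, β]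
  obtain ⟨τ, hτmem, hτmin⟩ := isCompact_Icc.exists_isMinOn (nonempty_Icc.2 hβ1)
    (hh0.continuous.continuousOn)
  have hτle : ∀ t ∈ Icc ψ1 β, h0 τ ≤ h0 t := fun t ht => hτmin ht
  have hτψ1 : h0 τ ≤ h0 ψ1 := hτle ψ1 (left_mem_Icc.2 hβ1)
  have hτβ : τ < β := by
    rcases eq_or_lt_of_le hτmem.2 with h | h
    · exfalso; rw [h] at hτψ1; linarith
    · exact h
  set X := h0 τ with hX_def
  -- distance facts along [ψ1, β]
  have hnear : ∀ t ∈ Icc ψ1 β, |h0 t - h0 ψ1| < min (μ / 2) (r / 2) := by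
    intro t ht
    apply hrh
    rw [Real.dist_eq, abs_lt]
    obtain ⟨h1, h2⟩ := ht
    constructor <;> nlinarith
  have hτnear : |X - h0 ψ1| < min (μ / 2) (r / 2) := hnear τ hτmem
  have hτμ : |X - h0 ψ1| < μ / 2 := lt_of_lt_of_le hτnear (min_le_left _ _)
  have hτr : |X - h0 ψ1| < r / 2 := lt_of_lt_of_le hτnear (min_le_right _ _)
  -- column membership facts
  have hcol_ball : ∀ y ∈ Icc ψ1 β, ((X, y) : ℝ × ℝ) ∈ Metric.closedBall P (2 * r) := by
    intro y hy
    rw [Metric.mem_closedBall, Prod.dist_eq]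
    have h1 : dist X P.1 ≤ r / 2 := by
      rw [hP_def, Real.dist_eq]
      exact hτr.le
    have h2 : dist y P.2 ≤ 2 * r := by
      rw [hP_def, Real.dist_eq, abs_le]
      obtain ⟨hy1, hy2⟩ := hy
      constructor <;> nlinarith
    exact sup_le (by linarith) h2
  have hcol_V : ∀ y ∈ Icc ψ1 β, ((X, y) : ℝ × ℝ) ∈ V := fun y hy => hcb_sub (hcol_ball y hy)
  have hcol_q : ∀ y ∈ Icc ψ1 β, q (X, y) ∈ Icc (c - δ) (c + δ) :=
    fun y hy => hq_range _ (hcol_ball y hy)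
  have hcol_K : ∀ y ∈ Icc ψ1 β,
      ((X, y) : ℝ × ℝ) ∈ {p : ℝ × ℝ | h0 p.2 - μ ≤ p.1 ∧ p.1 ≤ h0 p.2 + μ ∧ ψ1 ≤ p.2 ∧ p.2 ≤ ψ2} := by
    intro y hy
    have h1 := hnear y hy
    have h2 : |h0 y - h0 ψ1| < μ / 2 := lt_of_lt_of_le h1 (min_le_left _ _)
    have h3 := abs_lt.mp h2
    have h4 := abs_lt.mp hτμ
    refine ⟨by simp; linarith, by simp; linarith, by simp [hy.1], by simp; linarith [hy.2]⟩
  -- q ≤ c on the column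
  have hq_le : ∀ y ∈ Icc ψ1 β, q (X, y) ≤ c := by
    intro y hy
    have hXle : X ≤ h0 y := hτle y hy
    rcases eq_or_lt_of_le hXle with h | h
    · rw [h]; exact le_of_eq (hson y ⟨hy.1, by linarith [hy.2]⟩)
    · have h2 : |h0 y - h0 ψ1| < μ / 2 := lt_of_lt_of_le (hnear y hy) (min_le_left _ _)
      have h3 := abs_lt.mp h2
      have h4 := abs_lt.mp hτμ
      exact (hsubl y ⟨hy.1, by linarith [hy.2]⟩ X (by linarith) h).le
  -- exceptionality at τ : the vertical derivative vanishes there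
  have hpd2τ : pd2 q (X, τ) = 0 := by
    rcases eq_or_lt_of_le hτmem.1 with h | h
    · -- τ = ψ1
      have hXψ1 : X = h0 ψ1 := by rw [hX_def, ← h]
      have hv := hasDerivAt_vert hV hq (show ((h0 ψ1, ψ1) : ℝ × ℝ) ∈ V from hPV)
      have : pdy q (h0 ψ1, ψ1) = pd2 q (h0 ψ1, ψ1) := hv.deriv.symm ▸ rfl
      rw [hXψ1, ← h]
      rw [← this] -- ?
      exact hexc
    · -- interior minimum
      have hτV : ((h0 τ, τ) : ℝ × ℝ) ∈ V := by
        have := hcol_V τ hτmem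
        simpa [hX_def] using this
      have hloc : IsLocalMin h0 τ := hτmin.isLocalMin (Icc_mem_nhds h hτβ)
      have hd0 : deriv h0 τ = 0 := hloc.deriv_eq_zero
      have hder := hasDerivAt_curve hV hq
        ((hh0.differentiable (by norm_num)).differentiableAt.hasDerivAt) hτV
      have hτψ2 : τ < ψ2 := by linarith
      have hconst : (fun s => q (h0 s, s)) =ᶠ[nhds τ] (fun _ => c) := by
        filter_upwards [Ioo_mem_nhds h hτψ2] with t ht
        exact hson t ⟨ht.1.le, ht.2.le⟩
      have hzero : HasDerivAt (fun s => q (h0 s, s)) 0 τ :=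
        (hasDerivAt_const τ c).congr_of_eventuallyEq hconst
      have huniq := hder.unique hzero
      rw [hd0] at huniq
      simpa [hX_def] using huniq
  -- first and second derivatives along the column
  have hIccsub : Icc τ β ⊆ Icc ψ1 β := Icc_subset_Icc hτmem.1 le_rfl
  have hw1 : ∀ y ∈ Icc ψ1 β, HasDerivAt (fun y' => Bfun γ (q (X, y')))
      (bb γ (q (X, y)) * pd2 q (X, y)) y := by
    intro y hy
    have h1 := (hpack _ (hcol_q y hy)).2.2.2.2.1
    have h2 := hasDerivAt_vert hV hq (hcol_V y hy)
    simpa [Function.comp_def] using h1.comp y h2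
  have hw2 : ∀ y ∈ Icc ψ1 β, HasDerivAt (fun y' => bb γ (q (X, y')) * pd2 q (X, y'))
      ((deriv (bb γ) (q (X, y)) * pd2 q (X, y)) * pd2 q (X, y)
        + bb γ (q (X, y)) * pd22 q (X, y)) y := by
    intro y hy
    have h1 := (hpack _ (hcol_q y hy)).2.2.2.2.2.2.1
    have h2 := hasDerivAt_vert hV hq (hcol_V y hy)
    have h3 : HasDerivAt (fun y' => bb γ (q (X, y'))) (deriv (bb γ) (q (X, y)) * pd2 q (X, y)) y := by
      simpa [Function.comp_def] using h1.comp y h2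
    exact h3.mul (hasDerivAt_pd2_vert hV hq (hcol_V y hy))
  -- strict ball membership for the column
  have hball_strict : ∀ y ∈ Icc ψ1 β, ((X, y) : ℝ × ℝ) ∈ Metric.ball P (2 * r) := by
    intro y hy
    rw [Metric.mem_ball, Prod.dist_eq]
    have h1 : dist X P.1 ≤ r / 2 := by rw [hP_def, Real.dist_eq]; exact hτr.le
    have h2 : dist y P.2 ≤ r / 2 := by
      rw [hP_def, Real.dist_eq, abs_le]
      obtain ⟨hy1, hy2⟩ := hy
      constructor <;> nlinarith
    have : dist X P.1 ⊔ dist y P.2 ≤ r / 2 := sup_le h1 h2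
    linarith [this]
  -- identification of pdy pdy with the classical second derivative
  have hpdyy : ∀ y ∈ Icc ψ1 β, pdy (pdy (fun z => Bfun γ (q z))) (X, y)
      = (deriv (bb γ) (q (X, y)) * pd2 q (X, y)) * pd2 q (X, y)
        + bb γ (q (X, y)) * pd22 q (X, y) := by
    intro y hy
    have hopen_col : IsOpen {y' : ℝ | ((X, y') : ℝ × ℝ) ∈ Metric.ball P (2 * r)} :=
      Metric.isOpen_ball.preimage (continuous_const.prodMk continuous_id)
    have heq : (fun y' => pdy (fun z => Bfun γ (q z)) (X, y')) =ᶠ[nhds y]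
        (fun y' => bb γ (q (X, y')) * pd2 q (X, y')) := by
      filter_upwards [hopen_col.mem_nhds (hball_strict y hy)] with y' hy'
      have hcb : ((X, y') : ℝ × ℝ) ∈ Metric.closedBall P (2 * r) :=
        Metric.ball_subset_closedBall hy'
      have h1 := (hpack _ (hq_range _ hcb)).2.2.2.2.1
      have h2 := hasDerivAt_vert hV hq (hcb_sub hcb)
      have h3 : HasDerivAt (fun y'' => Bfun γ (q (X, y'')))
          (bb γ (q (X, y')) * pd2 q (X, y')) y' := by
        simpa [Function.comp_def] using h1.comp y' h2
      have h4 : pdy (fun z => Bfun γ (q z)) (X, y')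
          = deriv (fun y'' => Bfun γ (q (X, y''))) y' := rfl
      rw [h4, h3.deriv]
    have h5 : pdy (pdy (fun z => Bfun γ (q z))) (X, y)
        = deriv (fun y' => pdy (fun z => Bfun γ (q z)) (X, y')) y := rfl
    rw [h5, heq.deriv_eq, (hw2 y hy).deriv]
  -- identification of pdx pdx with the chain-rule expansion
  have hpdxx : ∀ y ∈ Icc ψ1 β, pdx (pdx (fun z => Afun γ (q z))) (X, y)
      = (deriv (FF γ) (q (X, y)) * pd1 q (X, y)) * pd1 q (X, y)
        + FF γ (q (X, y)) * pd11 q (X, y) := by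
    intro y hy
    have hopen_row : IsOpen {x' : ℝ | ((x', y) : ℝ × ℝ) ∈ Metric.ball P (2 * r)} :=
      Metric.isOpen_ball.preimage (continuous_id.prodMk continuous_const)
    have hXrow : X ∈ {x' : ℝ | ((x', y) : ℝ × ℝ) ∈ Metric.ball P (2 * r)} := hball_strict y hy
    have heq : (fun x' => pdx (fun z => Afun γ (q z)) (x', y)) =ᶠ[nhds X]
        (fun x' => FF γ (q (x', y)) * pd1 q (x', y)) := by
      filter_upwards [hopen_row.mem_nhds hXrow] with x' hx'
      have hcb : ((x', y) : ℝ × ℝ) ∈ Metric.closedBall P (2 * r) :=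
        Metric.ball_subset_closedBall hx'
      have h1 := (hpack _ (hq_range _ hcb)).1
      have h2 := hasDerivAt_horiz hV hq (hcb_sub hcb)
      have h3 : HasDerivAt (fun x'' => Afun γ (q (x'', y)))
          (FF γ (q (x', y)) * pd1 q (x', y)) x' := by
        simpa [Function.comp_def] using h1.comp x' h2
      have h4 : pdx (fun z => Afun γ (q z)) (x', y)
          = deriv (fun x'' => Afun γ (q (x'', y))) x' := rfl
      rw [h4, h3.deriv]
    have hGd : HasDerivAt (fun x' => FF γ (q (x', y)) * pd1 q (x', y))
        ((deriv (FF γ) (q (X, y)) * pd1 q (X, y)) * pd1 q (X, y)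
          + FF γ (q (X, y)) * pd11 q (X, y)) X := by
      have h1 := (hpack _ (hcol_q y hy)).2.1
      have h2 := hasDerivAt_horiz hV hq (hcol_V y hy)
      have h3 : HasDerivAt (fun x' => FF γ (q (x', y)))
          (deriv (FF γ) (q (X, y)) * pd1 q (X, y)) X := by
        simpa [Function.comp_def] using h1.comp X h2
      exact h3.mul (hasDerivAt_pd1_horiz hV hq (hcol_V y hy))
    have h5 : pdx (pdx (fun z => Afun γ (q z))) (X, y)
        = deriv (fun x' => pdx (fun z => Afun γ (q z)) (x', y)) X := rfl
    rw [h5, heq.deriv_eq, hGd.deriv]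
  -- positivity of φ along the column
  have hφlb : ∀ y ∈ Icc ψ1 β, κ * (c - q (X, y)) ≤ -(Bfun γ (q (X, y))) := by
    intro y hy
    have := (hpack _ (hcol_q y hy)).2.2.2.2.2.2.2 (hq_le y hy)
    linarith
  have hφpos : ∀ y ∈ Icc ψ1 β, 0 ≤ -(Bfun γ (q (X, y))) := by
    intro y hy
    have h1 := hφlb y hy
    have h2 : 0 ≤ c - q (X, y) := by linarith [hq_le y hy]
    nlinarith
  -- the differential inequality
  have hineq : ∀ y ∈ Icc ψ1 β,
      -((deriv (bb γ) (q (X, y)) * pd2 q (X, y)) * pd2 q (X, y)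
          + bb γ (q (X, y)) * pd22 q (X, y))
        ≤ C * (-(Bfun γ (q (X, y)))) := by
    intro y hy
    have hchap : pdx (pdx fun z => Afun γ (q z)) (X, y)
        + pdy (pdy fun z => Bfun γ (q z)) (X, y) = 0 := hPDE _ (hcol_K y hy)
    rw [hpdxx y hy, hpdyy y hy] at hchap
    have hkey : -((deriv (bb γ) (q (X, y)) * pd2 q (X, y)) * pd2 q (X, y)
          + bb γ (q (X, y)) * pd22 q (X, y))
        = (deriv (FF γ) (q (X, y)) * pd1 q (X, y)) * pd1 q (X, y)
          + FF γ (q (X, y)) * pd11 q (X, y) := by linarith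
    rw [hkey]
    have hdFF : deriv (FF γ) (q (X, y)) ≤ 0 := (hpack _ (hcol_q y hy)).2.2.1
    have hterm1 : (deriv (FF γ) (q (X, y)) * pd1 q (X, y)) * pd1 q (X, y) ≤ 0 := by
      have := mul_self_nonneg (pd1 q (X, y))
      nlinarith
    have hFFb : |FF γ (q (X, y))| ≤ CF * |q (X, y) - c| := (hpack _ (hcol_q y hy)).2.2.2.1
    have hpd11b : |pd11 q (X, y)| ≤ D := by
      have := hD _ (hcol_ball y hy)
      rwa [Real.norm_eq_abs] at this
    have habs : |q (X, y) - c| = c - q (X, y) := by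
      rw [abs_sub_comm]
      exact abs_of_nonneg (by linarith [hq_le y hy])
    have hterm2 : FF γ (q (X, y)) * pd11 q (X, y) ≤ CF * (c - q (X, y)) * D := by
      calc FF γ (q (X, y)) * pd11 q (X, y) ≤ |FF γ (q (X, y)) * pd11 q (X, y)| := le_abs_self _
        _ = |FF γ (q (X, y))| * |pd11 q (X, y)| := abs_mul _ _
        _ ≤ (CF * |q (X, y) - c|) * D := by
            apply mul_le_mul hFFb hpd11b (abs_nonneg _)
            positivity
        _ = CF * (c - q (X, y)) * D := by rw [habs]
    have hcq : κ * (c - q (X, y)) ≤ -(Bfun γ (q (X, y))) := hφlb y hy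
    have hfinal : CF * (c - q (X, y)) * D ≤ C * (-(Bfun γ (q (X, y)))) := by
      rw [hC_def]
      have h9 : 0 ≤ (c - q (X, y)) := by linarith [hq_le y hy]
      have h10 : CF * D * (c - q (X, y)) ≤ CF * D * ((-(Bfun γ (q (X, y)))) / κ) := by
        apply mul_le_mul_of_nonneg_left _ (by positivity)
        rw [le_div_iff₀ hκ0]
        nlinarith
      calc CF * (c - q (X, y)) * D = CF * D * (c - q (X, y)) := by ring
        _ ≤ CF * D * ((-(Bfun γ (q (X, y)))) / κ) := h10
        _ = CF * D / κ * (-(Bfun γ (q (X, y)))) := by ring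
    linarith
  -- data at τ
  have hqτ : q (X, τ) = c := by
    have := hson τ ⟨hτmem.1, by linarith⟩
    simpa [hX_def] using this
  have hφτ : -(Bfun γ (q (X, τ))) = 0 := by
    rw [hqτ, hc_def, Bfun_cstar hγ]
    ring
  have hφ'τ : -(bb γ (q (X, τ)) * pd2 q (X, τ)) = 0 := by rw [hpd2τ]; ring
  -- Grönwall
  have hlen : C * (β - τ) ^ 2 < 1 := by
    have h1 : β - τ ≤ ε := by have := hτmem.1; linarith
    have h2 : 0 ≤ β - τ := by linarith
    have h3 : (β - τ) ^ 2 ≤ ε ^ 2 := by nlinarith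
    nlinarith [mul_le_mul_of_nonneg_left h3 hC0]
  have hzero := gronwall_zero (φ := fun y => -(Bfun γ (q (X, y))))
    (φ' := fun y => -(bb γ (q (X, y)) * pd2 q (X, y)))
    (φ'' := fun y => -((deriv (bb γ) (q (X, y)) * pd2 q (X, y)) * pd2 q (X, y)
      + bb γ (q (X, y)) * pd22 q (X, y)))
    hτβ.le hC0 hlen
    (fun t ht => (hw1 t (hIccsub ht)).neg)
    (fun t ht => (hw2 t (hIccsub ht)).neg)
    hφτ hφ'τ
    (fun t ht => hφpos t (hIccsub ht))
    (fun t ht => hineq t (hIccsub ht))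
  have hβzero : -(Bfun γ (q (X, β))) = 0 := hzero β (right_mem_Icc.2 hτβ.le)
  -- strict subsonicity at (X, β) gives the contradiction
  have hβIcc : β ∈ Icc ψ1 β := right_mem_Icc.2 hβ1
  have h2 : |h0 β - h0 ψ1| < μ / 2 := lt_of_lt_of_le (hnear β hβIcc) (min_le_left _ _)
  have h3 := abs_lt.mp h2
  have h4 := abs_lt.mp hτμ
  have hqβlt : q (X, β) < c :=
    hsubl β ⟨hβ1, hβψ2⟩ X (by linarith) (by linarith)
  have hcontra := hφlb β hβIcc
  nlinarith

/-- local behavior of the sonic curve `φ = h₀(ψ)` near an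
exceptional endpoint (Lemma `lemma-aaa2`). -/
theorem stmt_12 (γ : ℝ) (hγ : 1 < γ)
    (ψ1 ψ2 μ : ℝ) (hψ : ψ1 < ψ2) (hμ : 0 < μ)
    (h0 : ℝ → ℝ) (hh0 : ContDiff ℝ 2 h0)
    (V : Set (ℝ × ℝ)) (hV : IsOpen V)
    (hKV : {p : ℝ × ℝ | h0 p.2 - μ ≤ p.1 ∧ p.1 ≤ h0 p.2 + μ ∧ ψ1 ≤ p.2 ∧ p.2 ≤ ψ2} ⊆ V)
    (q : ℝ × ℝ → ℝ) (hq : ContDiffOn ℝ 2 q V)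
    (hPDE : ∀ p ∈ {p : ℝ × ℝ | h0 p.2 - μ ≤ p.1 ∧ p.1 ≤ h0 p.2 + μ ∧ ψ1 ≤ p.2 ∧ p.2 ≤ ψ2},
      chap γ q p)
    (hson : ∀ ψ ∈ Icc ψ1 ψ2, q (h0 ψ, ψ) = cstar γ)
    (hsubl : ∀ ψ ∈ Icc ψ1 ψ2, ∀ φ, h0 ψ - μ ≤ φ → φ < h0 ψ → q (φ, ψ) < cstar γ) :
    ((pdy q (h0 ψ1, ψ1) = 0 ∧ deriv h0 ψ1 = 0 →
        ∃ ε > 0, ε ≤ ψ2 - ψ1 ∧ ∀ ψ ∈ Icc ψ1 (ψ1 + ε), h0 ψ ≤ h0 ψ1)) ∧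
    ((pdy q (h0 ψ2, ψ2) = 0 ∧ deriv h0 ψ2 = 0 →
        ∃ ε > 0, ε ≤ ψ2 - ψ1 ∧ ∀ ψ ∈ Icc (ψ2 - ε) ψ2, h0 ψ ≤ h0 ψ2)) := by

  constructor
  · rintro ⟨hexc, -⟩
    exact core γ hγ ψ1 ψ2 μ hψ hμ h0 hh0 V hV hKV q hq hPDE hson hsubl hexc
  · rintro ⟨hexc, -⟩
    -- reflect the stream variable: ψ ↦ ψ1 + ψ2 - ψ
    set a := ψ1 + ψ2 with ha_def
    have hRmem : ∀ ψ, ψ ∈ Icc ψ1 ψ2 → a - ψ ∈ Icc ψ1 ψ2 := by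
      intro ψ hmem
      obtain ⟨h1, h2⟩ := hmem
      exact ⟨by simp [ha_def]; linarith, by simp [ha_def]; linarith⟩
    have hh0' : ContDiff ℝ 2 (fun ψ => h0 (a - ψ)) :=
      hh0.comp (contDiff_const.sub contDiff_id)
    have hV' : IsOpen ((fun z : ℝ × ℝ => (z.1, a - z.2)) ⁻¹' V) :=
      hV.preimage (continuous_fst.prodMk (continuous_const.sub continuous_snd))
    have hKV' : {p : ℝ × ℝ | (fun ψ => h0 (a - ψ)) p.2 - μ ≤ p.1 ∧
        p.1 ≤ (fun ψ => h0 (a - ψ)) p.2 + μ ∧ ψ1 ≤ p.2 ∧ p.2 ≤ ψ2} ⊆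
        ((fun z : ℝ × ℝ => (z.1, a - z.2)) ⁻¹' V) := by
      rintro ⟨x, y⟩ ⟨h1, h2, h3, h4⟩
      apply hKV
      exact ⟨h1, h2, by simp [ha_def]; linarith, by simp [ha_def]; linarith⟩
    have hq' : ContDiffOn ℝ 2 (fun z : ℝ × ℝ => q (z.1, a - z.2))
        ((fun z : ℝ × ℝ => (z.1, a - z.2)) ⁻¹' V) := by
      apply hq.comp
      · exact (contDiff_fst.prodMk (contDiff_const.sub contDiff_snd)).contDiffOn
      · exact fun z hz => hz
    -- transfer of the equation under reflection
    have hpdy_reflect : ∀ (g : ℝ × ℝ → ℝ) (x y : ℝ),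
        pdy (fun z : ℝ × ℝ => g (z.1, a - z.2)) (x, y) = -(pdy g (x, a - y)) := by
      intro g x y
      exact deriv_comp_const_sub (fun t => g (x, t)) a y
    have hPDE' : ∀ p ∈ {p : ℝ × ℝ | (fun ψ => h0 (a - ψ)) p.2 - μ ≤ p.1 ∧
        p.1 ≤ (fun ψ => h0 (a - ψ)) p.2 + μ ∧ ψ1 ≤ p.2 ∧ p.2 ≤ ψ2},
        chap γ (fun z : ℝ × ℝ => q (z.1, a - z.2)) p := by
      rintro ⟨x, y⟩ ⟨h1, h2, h3, h4⟩
      have hmemK : ((x, a - y) : ℝ × ℝ) ∈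
          {p : ℝ × ℝ | h0 p.2 - μ ≤ p.1 ∧ p.1 ≤ h0 p.2 + μ ∧ ψ1 ≤ p.2 ∧ p.2 ≤ ψ2} :=
        ⟨h1, h2, by simp; linarith, by simp; linarith⟩
      have horig : pdx (pdx fun z => Afun γ (q z)) (x, a - y)
          + pdy (pdy fun z => Bfun γ (q z)) (x, a - y) = 0 := hPDE _ hmemK
      show pdx (pdx fun z => Afun γ (q (z.1, a - z.2))) (x, y)
          + pdy (pdy fun z => Bfun γ (q (z.1, a - z.2))) (x, y) = 0
      have hA : pdx (pdx fun z => Afun γ (q (z.1, a - z.2))) (x, y)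
          = pdx (pdx fun z => Afun γ (q z)) (x, a - y) := rfl
      have hB : pdy (pdy fun z => Bfun γ (q (z.1, a - z.2))) (x, y)
          = pdy (pdy fun z => Bfun γ (q z)) (x, a - y) := by
        calc pdy (pdy fun z => Bfun γ (q (z.1, a - z.2))) (x, y)
            = deriv (fun y' => -((pdy (fun z => Bfun γ (q z))) (x, a - y'))) y := by
              show deriv (fun y' => pdy (fun z => Bfun γ (q (z.1, a - z.2))) (x, y')) y = _
              congr 1
              funext y'
              exact hpdy_reflect (fun z => Bfun γ (q z)) x y'
          _ = -(deriv (fun t => -(pdy (fun z => Bfun γ (q z)) (x, t))) (a - y)) :=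
              deriv_comp_const_sub (fun t => -(pdy (fun z => Bfun γ (q z)) (x, t))) a y
          _ = -(-(deriv (fun t => pdy (fun z => Bfun γ (q z)) (x, t)) (a - y))) := by
              rw [deriv.fun_neg]
          _ = pdy (pdy fun z => Bfun γ (q z)) (x, a - y) := by rw [neg_neg]; rfl
      rw [hA, hB]
      exact horig
    have hson' : ∀ ψ ∈ Icc ψ1 ψ2,
        (fun z : ℝ × ℝ => q (z.1, a - z.2)) ((fun ψ => h0 (a - ψ)) ψ, ψ) = cstar γ := by
      intro ψ hmem
      exact hson (a - ψ) (hRmem ψ hmem)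
    have hsubl' : ∀ ψ ∈ Icc ψ1 ψ2, ∀ φ, (fun ψ => h0 (a - ψ)) ψ - μ ≤ φ →
        φ < (fun ψ => h0 (a - ψ)) ψ → (fun z : ℝ × ℝ => q (z.1, a - z.2)) (φ, ψ) < cstar γ := by
      intro ψ hmem φ hl hr
      exact hsubl (a - ψ) (hRmem ψ hmem) φ hl hr
    have hexc' : pdy (fun z : ℝ × ℝ => q (z.1, a - z.2)) ((fun ψ => h0 (a - ψ)) ψ1, ψ1) = 0 := by
      have h2 : a - ψ1 = ψ2 := by rw [ha_def]; ring
      show pdy (fun z : ℝ × ℝ => q (z.1, a - z.2)) (h0 (a - ψ1), ψ1) = 0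
      rw [h2]
      have h1 := hpdy_reflect q (h0 ψ2) ψ1
      rw [h1, h2, hexc, neg_zero]
    obtain ⟨ε, hε0, hεle, hεprop⟩ := core γ hγ ψ1 ψ2 μ hψ hμ
      (fun ψ => h0 (a - ψ)) hh0' _ hV' hKV' _ hq' hPDE' hson' hsubl' hexc'
    refine ⟨ε, hε0, hεle, ?_⟩
    intro ψ hmem
    obtain ⟨h1, h2⟩ := hmem
    have h3 : a - ψ ∈ Icc ψ1 (ψ1 + ε) := ⟨by simp [ha_def]; linarith, by simp [ha_def]; linarith⟩
    have h4 := hεprop (a - ψ) h3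
    have h5 : a - (a - ψ) = ψ := by ring
    have h6 : a - ψ1 = ψ2 := by rw [ha_def]; ring
    rw [h5, h6] at h4
    exact h4
end
end
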